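/- arXiv:1704.03406 — 9 statements merged into one kernel-verified Lean document; each statement's English description precedes it below -/
import Mathlib

section
/- Let S be a random variable that is strictly positive almost surely and let α ∈ [0,1] be such that E[S^α], E[S^{1+α}], E[S^{1+2α}], E[|log S|·S^α], E[|log S|·S^{1+α}] and E[|log S|·S^{1+2α}] are all finite. Then E[log(S)·S^{1+2α}]·E[S^α]·E[S^{1+α}] ≥ E[S^{1+α}]·E[S^{1+2α}]·E[log(S)·S^α]. -/
open MeasureTheory Real

/-- For `S > 0` a.s. and `α ∈ [0,1]`, with all relevant expectations finite,
`E[log S · S^(1+2α)] · E[S^α] · E[S^(1+α)] ≥ E[S^(1+α)] · E[S^(1+2α)] · E[log S · S^α]`. -/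
theorem log_moment_inequality_first
    {Ω : Type*} [MeasurableSpace Ω] (μ : Measure Ω) [IsProbabilityMeasure μ]
    (S : Ω → ℝ) (hSpos : ∀ᵐ ω ∂μ, 0 < S ω)
    (α : ℝ) (hα0 : 0 ≤ α) (hα1 : α ≤ 1)
    (hm1 : Integrable (fun ω => S ω ^ α) μ)
    (hm2 : Integrable (fun ω => S ω ^ (1 + α)) μ)
    (hm3 : Integrable (fun ω => S ω ^ (1 + 2 * α)) μ)
    (hl1 : Integrable (fun ω => |Real.log (S ω)| * S ω ^ α) μ)
    (hl2 : Integrable (fun ω => |Real.log (S ω)| * S ω ^ (1 + α)) μ)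
    (hl3 : Integrable (fun ω => |Real.log (S ω)| * S ω ^ (1 + 2 * α)) μ) :
    (∫ ω, S ω ^ (1 + α) ∂μ) * (∫ ω, S ω ^ (1 + 2 * α) ∂μ) *
        (∫ ω, Real.log (S ω) * S ω ^ α ∂μ) ≤
      (∫ ω, Real.log (S ω) * S ω ^ (1 + 2 * α) ∂μ) * (∫ ω, S ω ^ α ∂μ) *
        (∫ ω, S ω ^ (1 + α) ∂μ) := by
  have h1α : (0:ℝ) < 1 + α := by linarith
  -- S is AEMeasurable
  have hf2 : AEMeasurable (fun ω => S ω ^ (1 + α)) μ :=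
    hm2.aestronglyMeasurable.aemeasurable
  have hcont : ∀ e : ℝ, 0 ≤ e → Measurable (fun x : ℝ => x ^ e) := fun e he =>
    (continuous_id.rpow_const fun x => Or.inr he).measurable
  have hS : AEMeasurable S μ := by
    have : AEMeasurable (fun ω => (S ω ^ (1 + α)) ^ (1 + α)⁻¹) μ :=
      (hcont (1 + α)⁻¹ (by positivity)).comp_aemeasurable hf2
    refine this.congr ?_
    filter_upwards [hSpos] with ω hω
    rw [← Real.rpow_mul hω.le, mul_inv_cancel₀ h1α.ne', Real.rpow_one]
  have hlogS : AEMeasurable (fun ω => Real.log (S ω)) μ :=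
    Real.measurable_log.comp_aemeasurable hS
  have hrpow : ∀ e : ℝ, 0 ≤ e → AEMeasurable (fun ω => S ω ^ e) μ := fun e he =>
    (hcont e he).comp_aemeasurable hS
  -- integrability of log S * S^e from |log S| * S^e
  have hint : ∀ e : ℝ, Integrable (fun ω => |Real.log (S ω)| * S ω ^ e) μ → 0 ≤ e →
      Integrable (fun ω => Real.log (S ω) * S ω ^ e) μ := by
    intro e he
    intro hnn
    refine he.mono' ((hlogS.mul (hrpow e hnn)).aestronglyMeasurable) ?_
    filter_upwards [hSpos] with ω hω
    rw [Real.norm_eq_abs, abs_mul, abs_of_nonneg (Real.rpow_nonneg hω.le e)]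
  have hg1 : Integrable (fun ω => Real.log (S ω) * S ω ^ α) μ := hint α hl1 hα0
  have hg3 : Integrable (fun ω => Real.log (S ω) * S ω ^ (1 + 2 * α)) μ := hint _ hl3 (by linarith)
  set I1 := ∫ ω, S ω ^ α ∂μ with hI1
  set I2 := ∫ ω, S ω ^ (1 + α) ∂μ with hI2
  set I3 := ∫ ω, S ω ^ (1 + 2 * α) ∂μ with hI3
  set G1 := ∫ ω, Real.log (S ω) * S ω ^ α ∂μ with hG1
  set G3 := ∫ ω, Real.log (S ω) * S ω ^ (1 + 2 * α) ∂μ with hG3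
  -- key Chebyshev-type inequality: I3 * G1 ≤ G3 * I1
  have key : I3 * G1 ≤ G3 * I1 := by
    -- consider H on the product space
    set H : Ω × Ω → ℝ := fun p =>
      (Real.log (S p.1) - Real.log (S p.2)) * (S p.1 ^ (1 + α) - S p.2 ^ (1 + α)) *
        (S p.1 ^ α * S p.2 ^ α) with hH
    have hae : ∀ᵐ p ∂(μ.prod μ), 0 < S p.1 ∧ 0 < S p.2 :=
      (Measure.quasiMeasurePreserving_fst.ae hSpos).and
        (Measure.quasiMeasurePreserving_snd.ae hSpos)
    have hHnonneg : 0 ≤ ∫ p, H p ∂(μ.prod μ) := by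
      refine integral_nonneg_of_ae ?_
      filter_upwards [hae] with p hp
      have hmono : 0 ≤ (Real.log (S p.1) - Real.log (S p.2)) *
          (S p.1 ^ (1 + α) - S p.2 ^ (1 + α)) := by
        rcases le_total (S p.1) (S p.2) with h | h
        · have l1 : Real.log (S p.1) - Real.log (S p.2) ≤ 0 := by
            simp [sub_nonpos, Real.log_le_log_iff hp.1 hp.2, h]
          have l2 : S p.1 ^ (1 + α) - S p.2 ^ (1 + α) ≤ 0 :=
            sub_nonpos.2 (Real.rpow_le_rpow hp.1.le h h1α.le)
          nlinarith
        · exact mul_nonneg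
            (by simp [Real.log_le_log_iff hp.2 hp.1, h, sub_nonneg])
            (sub_nonneg.2 (Real.rpow_le_rpow hp.2.le h h1α.le))
      exact mul_nonneg hmono (mul_nonneg (Real.rpow_nonneg hp.1.le α)
        (Real.rpow_nonneg hp.2.le α))
    have hHeq : ∫ p, H p ∂(μ.prod μ) = 2 * (G3 * I1 - G1 * I3) := by
      have hexp : H =ᵐ[μ.prod μ] fun p =>
          ((Real.log (S p.1) * S p.1 ^ (1 + 2 * α)) * (S p.2 ^ α)
            - (Real.log (S p.1) * S p.1 ^ α) * (S p.2 ^ (1 + 2 * α)))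
          - ((Real.log (S p.2) * S p.2 ^ α) * (S p.1 ^ (1 + 2 * α))
            - (Real.log (S p.2) * S p.2 ^ (1 + 2 * α)) * (S p.1 ^ α)) := by
        filter_upwards [hae] with p hp
        have e1 : S p.1 ^ (1 + α) * S p.1 ^ α = S p.1 ^ (1 + 2 * α) := by
          rw [← Real.rpow_add hp.1]; ring_nf
        have e2 : S p.2 ^ (1 + α) * S p.2 ^ α = S p.2 ^ (1 + 2 * α) := by
          rw [← Real.rpow_add hp.2]; ring_nf
        simp only [hH]
        linear_combination (Real.log (S p.1) - Real.log (S p.2)) * S p.2 ^ α * e1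
          - (Real.log (S p.1) - Real.log (S p.2)) * S p.1 ^ α * e2
      rw [integral_congr_ae hexp]
      have t1 : Integrable (fun p : Ω × Ω =>
          (Real.log (S p.1) * S p.1 ^ (1 + 2 * α)) * (S p.2 ^ α)) (μ.prod μ) :=
        hg3.mul_prod hm1
      have t2 : Integrable (fun p : Ω × Ω =>
          (Real.log (S p.1) * S p.1 ^ α) * (S p.2 ^ (1 + 2 * α))) (μ.prod μ) :=
        hg1.mul_prod hm3
      have t3 : Integrable (fun p : Ω × Ω =>
          (S p.1 ^ (1 + 2 * α)) * (Real.log (S p.2) * S p.2 ^ α)) (μ.prod μ) :=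
        hm3.mul_prod hg1
      have t4 : Integrable (fun p : Ω × Ω =>
          (S p.1 ^ α) * (Real.log (S p.2) * S p.2 ^ (1 + 2 * α))) (μ.prod μ) :=
        hm1.mul_prod hg3
      have t3' : Integrable (fun p : Ω × Ω =>
          (Real.log (S p.2) * S p.2 ^ α) * (S p.1 ^ (1 + 2 * α))) (μ.prod μ) := by
        simpa [mul_comm] using t3
      have t4' : Integrable (fun p : Ω × Ω =>
          (Real.log (S p.2) * S p.2 ^ (1 + 2 * α)) * (S p.1 ^ α)) (μ.prod μ) := by
        simpa [mul_comm] using t4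
      have t12 : Integrable (fun p : Ω × Ω =>
          (Real.log (S p.1) * S p.1 ^ (1 + 2 * α)) * (S p.2 ^ α)
            - (Real.log (S p.1) * S p.1 ^ α) * (S p.2 ^ (1 + 2 * α))) (μ.prod μ) := t1.sub t2
      have t34 : Integrable (fun p : Ω × Ω =>
          (Real.log (S p.2) * S p.2 ^ α) * (S p.1 ^ (1 + 2 * α))
            - (Real.log (S p.2) * S p.2 ^ (1 + 2 * α)) * (S p.1 ^ α)) (μ.prod μ) := t3'.sub t4'
      rw [integral_sub t12 t34, integral_sub t1 t2, integral_sub t3' t4']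
      have i1 := integral_prod_mul (μ := μ) (ν := μ)
        (fun ω => Real.log (S ω) * S ω ^ (1 + 2 * α)) (fun ω => S ω ^ α)
      have i2 := integral_prod_mul (μ := μ) (ν := μ)
        (fun ω => Real.log (S ω) * S ω ^ α) (fun ω => S ω ^ (1 + 2 * α))
      have i3 : (∫ p : Ω × Ω, (Real.log (S p.2) * S p.2 ^ α) * (S p.1 ^ (1 + 2 * α))
          ∂(μ.prod μ)) = I3 * G1 := by
        rw [show (fun p : Ω × Ω => (Real.log (S p.2) * S p.2 ^ α) * (S p.1 ^ (1 + 2 * α)))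
          = fun p : Ω × Ω => (S p.1 ^ (1 + 2 * α)) * (Real.log (S p.2) * S p.2 ^ α) from
            funext fun p => mul_comm _ _]
        rw [integral_prod_mul (μ := μ) (ν := μ) (fun ω => S ω ^ (1 + 2 * α))
          (fun ω => Real.log (S ω) * S ω ^ α)]
      have i4 : (∫ p : Ω × Ω, (Real.log (S p.2) * S p.2 ^ (1 + 2 * α)) * (S p.1 ^ α)
          ∂(μ.prod μ)) = I1 * G3 := by
        rw [show (fun p : Ω × Ω => (Real.log (S p.2) * S p.2 ^ (1 + 2 * α)) * (S p.1 ^ α))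
          = fun p : Ω × Ω => (S p.1 ^ α) * (Real.log (S p.2) * S p.2 ^ (1 + 2 * α)) from
            funext fun p => mul_comm _ _]
        rw [integral_prod_mul (μ := μ) (ν := μ) (fun ω => S ω ^ α)
          (fun ω => Real.log (S ω) * S ω ^ (1 + 2 * α))]
      rw [i1, i2, i3, i4, ← hG1, ← hG3, ← hI1, ← hI3]
      ring
    rw [hHeq] at hHnonneg
    linarith
  have hI2nonneg : 0 ≤ I2 := by
    refine integral_nonneg_of_ae ?_
    filter_upwards [hSpos] with ω hω
    exact Real.rpow_nonneg hω.le _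
  nlinarith [mul_le_mul_of_nonneg_left key hI2nonneg]
end

section
/- Let S be a random variable that is strictly positive almost surely and let α ∈ [0,1] be such that E[S^α], E[S^{1+α}], E[S^{1+2α}], E[|log S|·S^α], E[|log S|·S^{1+α}] and E[|log S|·S^{1+2α}] are all finite. Then 2·E[log(S)·S^{1+2α}]·E[S^α]·E[S^{1+α}] ≥ E[S^{1+α}]·E[S^{1+2α}]·E[log(S)·S^α] + E[S^α]·E[S^{1+2α}]·E[log(S)·S^{1+α}]. -/
open MeasureTheory Real

lemma cheb_assoc {Ω : Type*} [MeasurableSpace Ω] (μ : Measure Ω) [IsProbabilityMeasure μ]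
    (w f g : Ω → ℝ)
    (hw : Integrable w μ)
    (hwf : Integrable (fun x => w x * f x) μ)
    (hwg : Integrable (fun x => w x * g x) μ)
    (hwfg : Integrable (fun x => w x * f x * g x) μ)
    (hkey : ∀ᵐ z ∂(μ.prod μ),
      0 ≤ w z.1 * w z.2 * ((f z.1 - f z.2) * (g z.1 - g z.2))) :
    (∫ x, w x * f x ∂μ) * (∫ x, w x * g x ∂μ) ≤
      (∫ x, w x ∂μ) * (∫ x, w x * f x * g x ∂μ) := by
  have hi1 : Integrable (fun z : Ω × Ω => (w z.1 * f z.1 * g z.1) * w z.2) (μ.prod μ) :=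
    hwfg.mul_prod hw
  have hi2 : Integrable (fun z : Ω × Ω => (w z.1 * f z.1) * (w z.2 * g z.2)) (μ.prod μ) :=
    hwf.mul_prod hwg
  have hi3 : Integrable (fun z : Ω × Ω => (w z.1 * g z.1) * (w z.2 * f z.2)) (μ.prod μ) :=
    hwg.mul_prod hwf
  have hi4 : Integrable (fun z : Ω × Ω => w z.1 * (w z.2 * f z.2 * g z.2)) (μ.prod μ) :=
    hw.mul_prod hwfg
  have hmono : (fun z : Ω × Ω => (w z.1 * f z.1) * (w z.2 * g z.2)
        + (w z.1 * g z.1) * (w z.2 * f z.2))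
      ≤ᵐ[μ.prod μ] fun z : Ω × Ω => (w z.1 * f z.1 * g z.1) * w z.2
        + w z.1 * (w z.2 * f z.2 * g z.2) := by
    filter_upwards [hkey] with z hz
    nlinarith [hz]
  have h := integral_mono_ae (hi2.add hi3) (hi1.add hi4) hmono
  simp only [Pi.add_apply] at h
  rw [integral_add hi2 hi3, integral_add hi1 hi4,
    integral_prod_mul (fun x => w x * f x * g x) w,
    integral_prod_mul (fun x => w x * f x) (fun x => w x * g x),
    integral_prod_mul (fun x => w x * g x) (fun x => w x * f x),
    integral_prod_mul w (fun x => w x * f x * g x)] at h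
  linarith

lemma comono {a b : ℝ} (ha : 0 < a) (hb : 0 < b) {q : ℝ} (hq : 0 ≤ q) :
    0 ≤ (Real.log a - Real.log b) * (a ^ q - b ^ q) := by
  rcases le_total a b with h | h
  · have h1 := Real.log_le_log ha h
    have h2 := Real.rpow_le_rpow ha.le h hq
    nlinarith
  · have h1 := Real.log_le_log hb h
    have h2 := Real.rpow_le_rpow hb.le h hq
    nlinarith

/-- For `S > 0` a.s. and `α ∈ [0,1]`, with all relevant expectations finite,
`2·E[log S · S^(1+2α)]·E[S^α]·E[S^(1+α)]
  ≥ E[S^(1+α)]·E[S^(1+2α)]·E[log S · S^α] + E[S^α]·E[S^(1+2α)]·E[log S · S^(1+α)]`,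
expressing nonnegativity of the derivative of `α ↦ E[S^(1+2α)]/(E[S^α]E[S^(1+α)])`. -/
theorem log_moment_inequality_derivative
    {Ω : Type*} [MeasurableSpace Ω] (μ : Measure Ω) [IsProbabilityMeasure μ]
    (S : Ω → ℝ) (hSpos : ∀ᵐ ω ∂μ, 0 < S ω)
    (α : ℝ) (hα0 : 0 ≤ α) (hα1 : α ≤ 1)
    (hm1 : Integrable (fun ω => S ω ^ α) μ)
    (hm2 : Integrable (fun ω => S ω ^ (1 + α)) μ)
    (hm3 : Integrable (fun ω => S ω ^ (1 + 2 * α)) μ)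
    (hl1 : Integrable (fun ω => |Real.log (S ω)| * S ω ^ α) μ)
    (hl2 : Integrable (fun ω => |Real.log (S ω)| * S ω ^ (1 + α)) μ)
    (hl3 : Integrable (fun ω => |Real.log (S ω)| * S ω ^ (1 + 2 * α)) μ) :
    (∫ ω, S ω ^ (1 + α) ∂μ) * (∫ ω, S ω ^ (1 + 2 * α) ∂μ) *
          (∫ ω, Real.log (S ω) * S ω ^ α ∂μ) +
        (∫ ω, S ω ^ α ∂μ) * (∫ ω, S ω ^ (1 + 2 * α) ∂μ) *
          (∫ ω, Real.log (S ω) * S ω ^ (1 + α) ∂μ) ≤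
      2 * (∫ ω, Real.log (S ω) * S ω ^ (1 + 2 * α) ∂μ) * (∫ ω, S ω ^ α ∂μ) *
        (∫ ω, S ω ^ (1 + α) ∂μ) := by
  -- S is a.e. measurable
  have hSm : AEMeasurable S μ := by
    refine (hm2.aemeasurable.div hm1.aemeasurable).congr ?_
    filter_upwards [hSpos] with ω hω
    rw [Pi.div_apply, Real.rpow_add hω, Real.rpow_one, mul_div_assoc,
      div_self (ne_of_gt (Real.rpow_pos_of_pos hω α)), mul_one]
  have hlog : AEMeasurable (fun ω => Real.log (S ω)) μ :=
    Real.measurable_log.comp_aemeasurable hSm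
  have hp : ∀ q : ℝ, AEMeasurable (fun ω => S ω ^ q) μ := fun q => by
    refine (Real.measurable_exp.comp_aemeasurable (hlog.mul_const q)).congr ?_
    filter_upwards [hSpos] with ω hω
    exact (Real.rpow_def_of_pos hω q).symm
  -- exponent arithmetic
  have hee : ∀ᵐ ω ∂μ, S ω ^ α * S ω ^ (1 + α) = S ω ^ (1 + 2 * α) := by
    filter_upwards [hSpos] with ω hω
    rw [← Real.rpow_add hω]; congr 1; ring
  -- integrability facts for the first application (w = S^α)
  have hwf1 : Integrable (fun x => S x ^ α * Real.log (S x)) μ := by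
    refine hl1.mono' ((hp α).mul hlog).aestronglyMeasurable ?_
    filter_upwards [hSpos] with ω hω
    rw [Real.norm_eq_abs, abs_mul, abs_of_pos (Real.rpow_pos_of_pos hω α), mul_comm]
  have hwg : Integrable (fun x => S x ^ α * S x ^ (1 + α)) μ :=
    hm3.congr (hee.mono fun ω h => h.symm)
  have hwfg1 : Integrable (fun x => S x ^ α * Real.log (S x) * S x ^ (1 + α)) μ := by
    refine hl3.mono' (((hp α).mul hlog).mul (hp (1 + α))).aestronglyMeasurable ?_
    filter_upwards [hSpos, hee] with ω hω he
    rw [Real.norm_eq_abs, abs_mul, abs_mul, abs_of_pos (Real.rpow_pos_of_pos hω α),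
      abs_of_pos (Real.rpow_pos_of_pos hω (1 + α))]
    exact le_of_eq (by rw [← he]; ring)
  -- integrability facts for the second application (w = S^(1+α))
  have hwf2 : Integrable (fun x => S x ^ (1 + α) * Real.log (S x)) μ := by
    refine hl2.mono' ((hp (1 + α)).mul hlog).aestronglyMeasurable ?_
    filter_upwards [hSpos] with ω hω
    rw [Real.norm_eq_abs, abs_mul, abs_of_pos (Real.rpow_pos_of_pos hω (1 + α)), mul_comm]
  have hwg2 : Integrable (fun x => S x ^ (1 + α) * S x ^ α) μ := by
    refine hwg.congr (Filter.Eventually.of_forall fun x => by ring)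
  have hwfg2 : Integrable (fun x => S x ^ (1 + α) * Real.log (S x) * S x ^ α) μ := by
    refine hwfg1.congr (Filter.Eventually.of_forall fun x => by ring)
  -- positivity a.e. on the product
  have hz1 : ∀ᵐ z : Ω × Ω ∂(μ.prod μ), 0 < S z.1 :=
    (Measure.quasiMeasurePreserving_fst (μ := μ) (ν := μ)).tendsto_ae.eventually hSpos
  have hz2 : ∀ᵐ z : Ω × Ω ∂(μ.prod μ), 0 < S z.2 :=
    (Measure.quasiMeasurePreserving_snd (μ := μ) (ν := μ)).tendsto_ae.eventually hSpos
  have hkey1 : ∀ᵐ z : Ω × Ω ∂(μ.prod μ), 0 ≤ S z.1 ^ α * S z.2 ^ α *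
      ((Real.log (S z.1) - Real.log (S z.2)) * (S z.1 ^ (1 + α) - S z.2 ^ (1 + α))) := by
    filter_upwards [hz1, hz2] with z h1 h2
    exact mul_nonneg (mul_nonneg (Real.rpow_pos_of_pos h1 α).le
      (Real.rpow_pos_of_pos h2 α).le) (comono h1 h2 (by linarith))
  have hkey2 : ∀ᵐ z : Ω × Ω ∂(μ.prod μ), 0 ≤ S z.1 ^ (1 + α) * S z.2 ^ (1 + α) *
      ((Real.log (S z.1) - Real.log (S z.2)) * (S z.1 ^ α - S z.2 ^ α)) := by
    filter_upwards [hz1, hz2] with z h1 h2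
    exact mul_nonneg (mul_nonneg (Real.rpow_pos_of_pos h1 (1 + α)).le
      (Real.rpow_pos_of_pos h2 (1 + α)).le) (comono h1 h2 hα0)
  have key1 := cheb_assoc μ (fun x => S x ^ α) (fun x => Real.log (S x))
    (fun x => S x ^ (1 + α)) hm1 hwf1 hwg hwfg1 hkey1
  have key2 := cheb_assoc μ (fun x => S x ^ (1 + α)) (fun x => Real.log (S x))
    (fun x => S x ^ α) hm2 hwf2 hwg2 hwfg2 hkey2
  -- rewrite the integrals into the statement's form
  have c0 : ∫ x, S x ^ α * S x ^ (1 + α) ∂μ = ∫ ω, S ω ^ (1 + 2 * α) ∂μ :=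
    integral_congr_ae hee
  have c0' : ∫ x, S x ^ (1 + α) * S x ^ α ∂μ = ∫ ω, S ω ^ (1 + 2 * α) ∂μ := by
    rw [← c0]; exact integral_congr_ae (Filter.Eventually.of_forall fun x => by ring)
  have c1 : ∫ x, S x ^ α * Real.log (S x) ∂μ = ∫ ω, Real.log (S ω) * S ω ^ α ∂μ :=
    integral_congr_ae (Filter.Eventually.of_forall fun x => by ring)
  have c2 : ∫ x, S x ^ (1 + α) * Real.log (S x) ∂μ
      = ∫ ω, Real.log (S ω) * S ω ^ (1 + α) ∂μ :=
    integral_congr_ae (Filter.Eventually.of_forall fun x => by ring)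
  have c3 : ∫ x, S x ^ α * Real.log (S x) * S x ^ (1 + α) ∂μ
      = ∫ ω, Real.log (S ω) * S ω ^ (1 + 2 * α) ∂μ := by
    refine integral_congr_ae ?_
    filter_upwards [hee] with ω he
    rw [← he]; ring
  have c4 : ∫ x, S x ^ (1 + α) * Real.log (S x) * S x ^ α ∂μ
      = ∫ ω, Real.log (S ω) * S ω ^ (1 + 2 * α) ∂μ := by
    rw [← c3]; exact integral_congr_ae (Filter.Eventually.of_forall fun x => by ring)
  rw [c0, c1, c3] at key1
  rw [c0', c2, c4] at key2
  have hE1 : 0 ≤ ∫ ω, S ω ^ α ∂μ :=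
    integral_nonneg_of_ae (hSpos.mono fun ω h => (Real.rpow_pos_of_pos h α).le)
  have hE2 : 0 ≤ ∫ ω, S ω ^ (1 + α) ∂μ :=
    integral_nonneg_of_ae (hSpos.mono fun ω h => (Real.rpow_pos_of_pos h (1 + α)).le)
  nlinarith [mul_le_mul_of_nonneg_left key1 hE2, mul_le_mul_of_nonneg_left key2 hE1]
end

section
/- Let S be a random variable that is strictly positive almost surely, with E[S^3] < ∞ and E[|log S|·(1 + S^3)] < ∞. Then the function f(α) := E[S^{1+2α}]/(E[S^α]·E[S^{1+α}]) is nondecreasing on the interval [0,1]: for all 0 ≤ α ≤ β ≤ 1, f(α) ≤ f(β). -/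
open MeasureTheory Real

/-- Core correlation inequality: for `0 ≤ u ≤ v`, `0 ≤ δ`, `v + δ ≤ 3`,
`E[S^(u+δ)]·E[S^v] ≤ E[S^u]·E[S^(v+δ)]` (log-convexity increments of `t ↦ E[S^t]`). -/
theorem exp_moment_increment
    {Ω : Type*} [MeasurableSpace Ω] (μ : Measure Ω) [IsProbabilityMeasure μ]
    (S : Ω → ℝ) (hSpos : ∀ᵐ ω ∂μ, 0 < S ω)
    (hS3 : Integrable (fun ω => S ω ^ (3 : ℝ)) μ)
    (u v δ : ℝ) (h0u : 0 ≤ u) (huv : u ≤ v) (hδ : 0 ≤ δ) (hv3 : v + δ ≤ 3) :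
    (∫ ω, S ω ^ (u + δ) ∂μ) * (∫ ω, S ω ^ v ∂μ) ≤
      (∫ ω, S ω ^ u ∂μ) * (∫ ω, S ω ^ (v + δ) ∂μ) := by
  obtain ⟨c, hc, rfl⟩ : ∃ c, 0 ≤ c ∧ v = u + c := ⟨v - u, by linarith, by ring⟩
  -- S is a.e.-measurable
  have hSm : AEMeasurable S μ := by
    have h1 : AEMeasurable (fun ω => (S ω ^ (3:ℝ)) ^ ((3:ℝ)⁻¹)) μ := by
      have := hS3.aemeasurable
      fun_prop
    refine AEMeasurable.congr h1 ?_
    filter_upwards [hSpos] with ω hω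
    rw [← Real.rpow_mul hω.le]
    norm_num
  -- integrability of all powers with exponent in [0,3]
  have hint : ∀ p : ℝ, 0 ≤ p → p ≤ 3 → Integrable (fun ω => S ω ^ p) μ := by
    intro p hp0 hp3
    have hone : Integrable (fun ω => 1 + S ω ^ (3:ℝ)) μ := (integrable_const 1).add hS3
    refine hone.mono ?_ ?_
    · exact (by fun_prop : AEMeasurable (fun ω => S ω ^ p) μ).aestronglyMeasurable
    · filter_upwards [hSpos] with ω hω
      have h3 : (0:ℝ) ≤ S ω ^ (3:ℝ) := Real.rpow_nonneg hω.le _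
      have hp : (0:ℝ) ≤ S ω ^ p := Real.rpow_nonneg hω.le _
      rw [Real.norm_eq_abs, Real.norm_eq_abs, abs_of_nonneg hp,
        abs_of_nonneg (by linarith : (0:ℝ) ≤ 1 + S ω ^ (3:ℝ))]
      rcases le_total (S ω) 1 with h | h
      · have : S ω ^ p ≤ 1 := Real.rpow_le_one hω.le h hp0
        linarith
      · have : S ω ^ p ≤ S ω ^ (3:ℝ) := Real.rpow_le_rpow_of_exponent_le h hp3
        linarith
  -- a.e. positivity on the product measure
  have h1 : ∀ᵐ z ∂(μ.prod μ), 0 < S z.1 := by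
    have hmap : ∀ᵐ x ∂(Measure.map (Prod.fst : Ω × Ω → Ω) (μ.prod μ)), 0 < S x := by
      rw [Measure.map_fst_prod]
      simpa using hSpos
    exact ae_of_ae_map measurable_fst.aemeasurable hmap
  have h2 : ∀ᵐ z ∂(μ.prod μ), 0 < S z.2 := by
    have hmap : ∀ᵐ x ∂(Measure.map (Prod.snd : Ω × Ω → Ω) (μ.prod μ)), 0 < S x := by
      rw [Measure.map_snd_prod]
      simpa using hSpos
    exact ae_of_ae_map measurable_snd.aemeasurable hmap
  -- nonnegativity of the symmetrized integrand
  have key : 0 ≤ ∫ z, (S z.1 ^ (u + c + δ) * S z.2 ^ u - S z.1 ^ (u + δ) * S z.2 ^ (u + c)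
      - S z.1 ^ (u + c) * S z.2 ^ (u + δ) + S z.1 ^ u * S z.2 ^ (u + c + δ)) ∂(μ.prod μ) := by
    refine integral_nonneg_of_ae ?_
    filter_upwards [h1, h2] with z ha hb
    simp only [Pi.zero_apply]
    set a := S z.1 with ha'
    set b := S z.2 with hb'
    simp only [Real.rpow_add ha, Real.rpow_add hb]
    have hau : (0:ℝ) ≤ a ^ u := (Real.rpow_pos_of_pos ha u).le
    have hbu : (0:ℝ) ≤ b ^ u := (Real.rpow_pos_of_pos hb u).le
    have hprod : 0 ≤ (a ^ δ - b ^ δ) * (a ^ c - b ^ c) := by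
      rcases le_total a b with h | h
      · have e1 : a ^ δ ≤ b ^ δ := Real.rpow_le_rpow ha.le h hδ
        have e2 : a ^ c ≤ b ^ c := Real.rpow_le_rpow ha.le h hc
        nlinarith
      · have e1 : b ^ δ ≤ a ^ δ := Real.rpow_le_rpow hb.le h hδ
        have e2 : b ^ c ≤ a ^ c := Real.rpow_le_rpow hb.le h hc
        nlinarith
    nlinarith [mul_nonneg (mul_nonneg hau hbu) hprod]
  -- expand the product integral
  have hI : ∀ p q : ℝ, 0 ≤ p → p ≤ 3 → 0 ≤ q → q ≤ 3 →
      Integrable (fun z : Ω × Ω => S z.1 ^ p * S z.2 ^ q) (μ.prod μ) :=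
    fun p q hp0 hp3 hq0 hq3 => (hint p hp0 hp3).mul_prod (hint q hq0 hq3)
  have i1 := hI (u + c + δ) u (by linarith) (by linarith) h0u (by linarith)
  have i2 := hI (u + δ) (u + c) (by linarith) (by linarith) (by linarith) (by linarith)
  have i3 := hI (u + c) (u + δ) (by linarith) (by linarith) (by linarith) (by linarith)
  have i4 := hI u (u + c + δ) h0u (by linarith) (by linarith) (by linarith)
  have i12 : Integrable (fun z : Ω × Ω => S z.1 ^ (u + c + δ) * S z.2 ^ u
      - S z.1 ^ (u + δ) * S z.2 ^ (u + c)) (μ.prod μ) := i1.sub i2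
  have i123 : Integrable (fun z : Ω × Ω => S z.1 ^ (u + c + δ) * S z.2 ^ u
      - S z.1 ^ (u + δ) * S z.2 ^ (u + c) - S z.1 ^ (u + c) * S z.2 ^ (u + δ)) (μ.prod μ) :=
    i12.sub i3
  have e1 : ∫ (a : Ω × Ω), S a.1 ^ (u + c + δ) * S a.2 ^ u ∂(μ.prod μ)
      = (∫ ω, S ω ^ (u + c + δ) ∂μ) * ∫ ω, S ω ^ u ∂μ :=
    integral_prod_mul (fun ω => S ω ^ (u + c + δ)) (fun ω => S ω ^ u)
  have e2 : ∫ (a : Ω × Ω), S a.1 ^ (u + δ) * S a.2 ^ (u + c) ∂(μ.prod μ)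
      = (∫ ω, S ω ^ (u + δ) ∂μ) * ∫ ω, S ω ^ (u + c) ∂μ :=
    integral_prod_mul (fun ω => S ω ^ (u + δ)) (fun ω => S ω ^ (u + c))
  have e3 : ∫ (a : Ω × Ω), S a.1 ^ (u + c) * S a.2 ^ (u + δ) ∂(μ.prod μ)
      = (∫ ω, S ω ^ (u + c) ∂μ) * ∫ ω, S ω ^ (u + δ) ∂μ :=
    integral_prod_mul (fun ω => S ω ^ (u + c)) (fun ω => S ω ^ (u + δ))
  have e4 : ∫ (a : Ω × Ω), S a.1 ^ u * S a.2 ^ (u + c + δ) ∂(μ.prod μ)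
      = (∫ ω, S ω ^ u ∂μ) * ∫ ω, S ω ^ (u + c + δ) ∂μ :=
    integral_prod_mul (fun ω => S ω ^ u) (fun ω => S ω ^ (u + c + δ))
  rw [integral_add i123 i4, integral_sub i12 i3, integral_sub i1 i2, e1, e2, e3, e4] at key
  nlinarith [key]

/-- The coefficient `f(α) = E[S^(1+2α)]/(E[S^α]·E[S^(1+α)])` of the depletion-of-points
quadratic drift is nondecreasing in `α` on `[0,1]`, for `S > 0` a.s. with
`E[S^3] < ∞` and `E[|log S|·(1+S^3)] < ∞`. -/
theorem drift_coefficient_monotone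
    {Ω : Type*} [MeasurableSpace Ω] (μ : Measure Ω) [IsProbabilityMeasure μ]
    (S : Ω → ℝ) (hSpos : ∀ᵐ ω ∂μ, 0 < S ω)
    (hS3 : Integrable (fun ω => S ω ^ (3 : ℝ)) μ)
    (hlog : Integrable (fun ω => |Real.log (S ω)| * (1 + S ω ^ (3 : ℝ))) μ)
    (f : ℝ → ℝ)
    (hf : ∀ α, f α = (∫ ω, S ω ^ (1 + 2 * α) ∂μ) /
        ((∫ ω, S ω ^ α ∂μ) * (∫ ω, S ω ^ (1 + α) ∂μ))) :
    ∀ α β : ℝ, 0 ≤ α → α ≤ β → β ≤ 1 → f α ≤ f β := by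
  intro α β hα hαβ hβ
  -- measurability and integrability
  have hSm : AEMeasurable S μ := by
    have h1 : AEMeasurable (fun ω => (S ω ^ (3:ℝ)) ^ ((3:ℝ)⁻¹)) μ := by
      have := hS3.aemeasurable
      fun_prop
    refine AEMeasurable.congr h1 ?_
    filter_upwards [hSpos] with ω hω
    rw [← Real.rpow_mul hω.le]
    norm_num
  have hint : ∀ p : ℝ, 0 ≤ p → p ≤ 3 → Integrable (fun ω => S ω ^ p) μ := by
    intro p hp0 hp3
    have hone : Integrable (fun ω => 1 + S ω ^ (3:ℝ)) μ := (integrable_const 1).add hS3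
    refine hone.mono ?_ ?_
    · exact (by fun_prop : AEMeasurable (fun ω => S ω ^ p) μ).aestronglyMeasurable
    · filter_upwards [hSpos] with ω hω
      have h3 : (0:ℝ) ≤ S ω ^ (3:ℝ) := Real.rpow_nonneg hω.le _
      have hp : (0:ℝ) ≤ S ω ^ p := Real.rpow_nonneg hω.le _
      rw [Real.norm_eq_abs, Real.norm_eq_abs, abs_of_nonneg hp,
        abs_of_nonneg (by linarith : (0:ℝ) ≤ 1 + S ω ^ (3:ℝ))]
      rcases le_total (S ω) 1 with h | h
      · have : S ω ^ p ≤ 1 := Real.rpow_le_one hω.le h hp0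
        linarith
      · have : S ω ^ p ≤ S ω ^ (3:ℝ) := Real.rpow_le_rpow_of_exponent_le h hp3
        linarith
  -- positivity of the moments
  have hpos : ∀ p : ℝ, 0 ≤ p → p ≤ 3 → 0 < ∫ ω, S ω ^ p ∂μ := by
    intro p hp0 hp3
    have hnn : 0 ≤ᵐ[μ] fun ω => S ω ^ p := by
      filter_upwards [hSpos] with ω hω
      exact (Real.rpow_pos_of_pos hω p).le
    rw [integral_pos_iff_support_of_nonneg_ae hnn (hint p hp0 hp3)]
    have hsupp : ∀ᵐ ω ∂μ, ω ∈ Function.support fun ω => S ω ^ p := by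
      filter_upwards [hSpos] with ω hω
      exact (Real.rpow_pos_of_pos hω p).ne'
    by_contra h
    push_neg at h
    have h0 : μ (Function.support fun ω => S ω ^ p) = 0 := le_antisymm h zero_le
    have hnm : ∀ᵐ ω ∂μ, ω ∉ Function.support fun ω => S ω ^ p :=
      measure_eq_zero_iff_ae_notMem.mp h0
    have hfalse : ∀ᵐ (_ : Ω) ∂μ, False := by
      filter_upwards [hsupp, hnm] with ω h1 h2
      exact h2 h1
    exact (IsProbabilityMeasure.ne_zero μ) (by simpa using hfalse)
  set I : ℝ → ℝ := fun p => ∫ ω, S ω ^ p ∂μ with hI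
  have pα := hpos α hα (by linarith)
  have pβ := hpos β (by linarith) (by linarith)
  have p1α := hpos (1 + α) (by linarith) (by linarith)
  have p1β := hpos (1 + β) (by linarith) (by linarith)
  have p12α := hpos (1 + 2 * α) (by linarith) (by linarith)
  have p12β := hpos (1 + 2 * β) (by linarith) (by linarith)
  have p1αβ := hpos (1 + α + β) (by linarith) (by linarith)
  -- two applications of the increment inequality
  have A1 : I β * I (1 + α + β) ≤ I α * I (1 + 2 * β) := by
    have := exp_moment_increment μ S hSpos hS3 α (1 + α + β) (β - α)
      hα (by linarith) (by linarith) (by linarith)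
    have e1 : α + (β - α) = β := by ring
    have e2 : 1 + α + β + (β - α) = 1 + 2 * β := by ring
    rw [e1, e2] at this
    exact this
  have A2 : I (1 + β) * I (1 + 2 * α) ≤ I (1 + α) * I (1 + α + β) := by
    have := exp_moment_increment μ S hSpos hS3 (1 + α) (1 + 2 * α) (β - α)
      (by linarith) (by linarith) (by linarith) (by linarith)
    have e1 : 1 + α + (β - α) = 1 + β := by ring
    have e2 : 1 + 2 * α + (β - α) = 1 + α + β := by ring
    rw [e1, e2] at this
    exact this
  rw [hf α, hf β]
  rw [div_le_div_iff₀ (by positivity) (by positivity)]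
  nlinarith [mul_le_mul_of_nonneg_left A2 pβ.le,
    mul_le_mul_of_nonneg_right A1 p1α.le, p1αβ, pα, pβ, p1α, p1β, p12α, p12β]
end

section
/- Let (S_j)_{j≥1} be a sequence of independent, identically distributed, strictly positive random variables with E[S_1^{2+α}] < ∞ for some α ∈ (0,1). Then for every constant c > 0, sup over all subsets X ⊆ {1,…,n} with |X| ≤ c·n^{2/3} of (1/n)·Σ_{j∈X} S_j^α converges to 0 in probability as n → ∞; that is, for every ε > 0, P( max_{X⊆[n], |X|≤c n^{2/3}} (1/n)Σ_{j∈X} S_j^α > ε ) → 0. -/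
open MeasureTheory Filter ProbabilityTheory

lemma rpow_le_add_aux (α : ℝ) (hα : 0 < α) {t x : ℝ} (ht : 0 < t) (hx : 0 ≤ x) :
    x ^ α ≤ t + x ^ (2 + α) * t ^ (-(2 / α)) := by
  rcases le_or_gt (x ^ α) t with h | h
  · have h2 : 0 ≤ x ^ (2 + α) * t ^ (-(2 / α)) :=
      mul_nonneg (Real.rpow_nonneg hx _) (Real.rpow_nonneg ht.le _)
    linarith
  · have hx0 : 0 < x := by
      rcases eq_or_lt_of_le hx with h0 | h0
      · rw [← h0, Real.zero_rpow hα.ne'] at h; linarith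
      · exact h0
    have h1 : t ^ (1 / α) < x := by
      have := Real.rpow_lt_rpow ht.le h (by positivity : (0:ℝ) < 1 / α)
      rwa [← Real.rpow_mul hx, mul_one_div_cancel hα.ne', Real.rpow_one] at this
    have h2 : t ^ (2 / α) ≤ x ^ (2 : ℝ) := by
      have := Real.rpow_le_rpow (Real.rpow_nonneg ht.le _) h1.le (by norm_num : (0:ℝ) ≤ 2)
      rwa [← Real.rpow_mul ht.le, show (1 / α) * 2 = 2 / α by ring] at this
    have h3 : x ^ (2 + α) = x ^ (2 : ℝ) * x ^ α := Real.rpow_add hx0 2 α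
    have h4 : x ^ α * t ^ (2 / α) ≤ x ^ (2 + α) := by
      rw [h3, mul_comm (x ^ (2:ℝ))]
      exact mul_le_mul_of_nonneg_left h2 (Real.rpow_nonneg hx _)
    have ht2 : 0 < t ^ (2 / α) := Real.rpow_pos_of_pos ht _
    have h5 : x ^ α ≤ x ^ (2 + α) * (t ^ (2 / α))⁻¹ := by
      rw [← le_div_iff₀ ht2] at h4
      rwa [div_eq_mul_inv] at h4
    rw [Real.rpow_neg ht.le]
    linarith

/-- Uniform convergence of random sums: for i.i.d. strictly positive `(S_j)` with
`E[S^(2+α)] < ∞` and `α ∈ (0,1)`, the maximum over subsets `X ⊆ [n]` of size at most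
`c·n^(2/3)` of `(1/n)·Σ_{j∈X} S_j^α` tends to `0` in probability. -/
theorem unif_convergence_random_sums
    {Ω : Type*} [MeasurableSpace Ω] (μ : Measure Ω) [IsProbabilityMeasure μ]
    (S : ℕ → Ω → ℝ) (hmeas : ∀ i, Measurable (S i))
    (hindep : iIndepFun S μ)
    (hident : ∀ i, IdentDistrib (S i) (S 1) μ μ)
    (hpos : ∀ i, ∀ᵐ ω ∂μ, 0 < S i ω)
    (α : ℝ) (hα0 : 0 < α) (hα1 : α < 1)
    (hint : Integrable (fun ω => S 1 ω ^ (2 + α)) μ) :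
    ∀ c : ℝ, 0 < c → ∀ ε : ℝ, 0 < ε →
      Tendsto
        (fun n : ℕ =>
          μ {ω | ∃ X : Finset ℕ, X ⊆ Finset.Icc 1 n ∧
              (X.card : ℝ) ≤ c * (n : ℝ) ^ ((2 : ℝ) / 3) ∧
              ε < (1 / (n : ℝ)) * ∑ j ∈ X, S j ω ^ α})
        atTop (nhds 0) := by
  intro c hc ε hε
  set E := ∫ ω, S 1 ω ^ (2 + α) ∂μ with hE
  have hmeasu : Measurable fun x : ℝ => x ^ (2 + α) :=
    (Real.continuous_rpow_const (by positivity)).measurable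
  have hid : ∀ j, IdentDistrib (fun ω => S j ω ^ (2 + α)) (fun ω => S 1 ω ^ (2 + α)) μ μ :=
    fun j => (hident j).comp hmeasu
  have hintj : ∀ j, Integrable (fun ω => S j ω ^ (2 + α)) μ :=
    fun j => (hid j).integrable_iff.mpr hint
  have hintegral : ∀ j, ∫ ω, S j ω ^ (2 + α) ∂μ = E := fun j => (hid j).integral_eq
  have hEnn : 0 ≤ E :=
    integral_nonneg_of_ae ((hpos 1).mono fun ω h => Real.rpow_nonneg h.le _)
  have hae : ∀ᵐ ω ∂μ, ∀ j, 0 < S j ω := ae_all_iff.mpr hpos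
  -- the eventual bound
  have key : ∀ᶠ n : ℕ in atTop,
      μ {ω | ∃ X : Finset ℕ, X ⊆ Finset.Icc 1 n ∧
          (X.card : ℝ) ≤ c * (n : ℝ) ^ ((2 : ℝ) / 3) ∧
          ε < (1 / (n : ℝ)) * ∑ j ∈ X, S j ω ^ α} ≤
        ENNReal.ofReal ((2 * E / ε) * (n : ℝ) ^ (-(1 / (3 * α)))) := by
    have hcn : Tendsto (fun n : ℕ => c * (n : ℝ) ^ (-(1/6 : ℝ))) atTop (nhds 0) := by
      have := (tendsto_rpow_neg_atTop (by norm_num : (0:ℝ) < 1/6)).comp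
        (tendsto_natCast_atTop_atTop (R := ℝ))
      simpa using this.const_mul c
    filter_upwards [hcn.eventually_lt_const (by positivity : (0:ℝ) < ε / 2),
      eventually_ge_atTop 1] with n hn2 hn1'
    have hn1 : (1 : ℝ) ≤ n := by exact_mod_cast hn1'
    have hn0 : (0 : ℝ) < n := lt_of_lt_of_le one_pos hn1
    set T : Ω → ℝ := fun ω => ∑ j ∈ Finset.Icc 1 n, S j ω ^ (2 + α) with hT
    set b : ℝ := (ε / 2) * (n : ℝ) ^ (1 + 1 / (3 * α)) with hb
    have hbpos : 0 < b := by
      have := Real.rpow_pos_of_pos hn0 (1 + 1 / (3 * α))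
      positivity
    -- Step A : event inclusion
    have hincl : {ω | ∃ X : Finset ℕ, X ⊆ Finset.Icc 1 n ∧
          (X.card : ℝ) ≤ c * (n : ℝ) ^ ((2 : ℝ) / 3) ∧
          ε < (1 / (n : ℝ)) * ∑ j ∈ X, S j ω ^ α} ≤ᵐ[μ] {ω | b ≤ T ω} := by
      filter_upwards [hae] with ω hω hev
      obtain ⟨X, hX1, hX2, hX3⟩ := hev
      set t : ℝ := (n : ℝ) ^ ((1:ℝ)/6) with htdef
      have ht : 0 < t := Real.rpow_pos_of_pos hn0 _
      have hsum1 : ∑ j ∈ X, S j ω ^ α ≤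
          (X.card : ℝ) * t + (∑ j ∈ X, S j ω ^ (2 + α)) * t ^ (-(2 / α)) := by
        calc ∑ j ∈ X, S j ω ^ α
            ≤ ∑ j ∈ X, (t + S j ω ^ (2 + α) * t ^ (-(2 / α))) :=
              Finset.sum_le_sum fun j _ => rpow_le_add_aux α hα0 ht (hω j).le
          _ = (X.card : ℝ) * t + (∑ j ∈ X, S j ω ^ (2 + α)) * t ^ (-(2 / α)) := by
              rw [Finset.sum_add_distrib, Finset.sum_const, nsmul_eq_mul, ← Finset.sum_mul]
      have hsub : ∑ j ∈ X, S j ω ^ (2 + α) ≤ T ω :=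
        Finset.sum_le_sum_of_subset_of_nonneg hX1
          (fun j _ _ => Real.rpow_nonneg (hω j).le _)
      have htne : 0 ≤ t ^ (-(2 / α)) := Real.rpow_nonneg ht.le _
      have hεlt : ε < (1 / (n : ℝ)) *
          (c * (n : ℝ) ^ ((2:ℝ)/3) * t + T ω * t ^ (-(2 / α))) := by
        refine lt_of_lt_of_le hX3 ?_
        have h1 : ∑ j ∈ X, S j ω ^ α ≤
            c * (n : ℝ) ^ ((2:ℝ)/3) * t + T ω * t ^ (-(2 / α)) := by
          refine hsum1.trans ?_
          gcongr
        have : (0:ℝ) ≤ 1 / n := by positivity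
        exact mul_le_mul_of_nonneg_left h1 this
      -- arithmetic of exponents
      have id1 : (1 / (n : ℝ)) * (c * (n : ℝ) ^ ((2:ℝ)/3) * t) = c * (n : ℝ) ^ (-(1/6 : ℝ)) := by
        rw [htdef, one_div, ← Real.rpow_neg_one (n:ℝ)]
        rw [show (n:ℝ) ^ (-1:ℝ) * (c * (n:ℝ) ^ ((2:ℝ)/3) * (n:ℝ) ^ ((1:ℝ)/6)) =
          c * ((n:ℝ) ^ (-1:ℝ) * (n:ℝ) ^ ((2:ℝ)/3) * (n:ℝ) ^ ((1:ℝ)/6)) by ring,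
          ← Real.rpow_add hn0, ← Real.rpow_add hn0]
        norm_num
      have id2 : t ^ (-(2 / α)) = (n : ℝ) ^ (-(1 / (3 * α))) := by
        rw [htdef, ← Real.rpow_mul hn0.le]
        congr 1
        field_simp
        ring
      have id3 : (n : ℝ) ^ (1 + 1 / (3 * α)) = (n : ℝ) * (n : ℝ) ^ (1 / (3 * α)) := by
        rw [Real.rpow_add hn0, Real.rpow_one]
      have hinv : (n : ℝ)⁻¹ * (n : ℝ) ^ (-(1 / (3 * α))) *
          ((n : ℝ) * (n : ℝ) ^ (1 / (3 * α))) = 1 := by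
        rw [← Real.rpow_neg_one (n:ℝ)]
        rw [show (n:ℝ) ^ (-1:ℝ) * (n:ℝ) ^ (-(1/(3*α))) * ((n:ℝ) * (n:ℝ) ^ (1/(3*α))) =
          ((n:ℝ) ^ (-1:ℝ) * (n:ℝ)) * ((n:ℝ) ^ (-(1/(3*α))) * (n:ℝ) ^ (1/(3*α))) by ring,
          ← Real.rpow_add hn0, Real.rpow_neg_one, inv_mul_cancel₀ hn0.ne']
        norm_num
      have hεlt2 : ε < c * (n : ℝ) ^ (-(1/6 : ℝ)) +
          T ω * ((n : ℝ)⁻¹ * (n : ℝ) ^ (-(1 / (3 * α)))) := by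
        have := hεlt
        rw [mul_add, id1] at this
        rw [id2] at this
        calc ε < c * (n : ℝ) ^ (-(1/6 : ℝ)) + 1 / (n:ℝ) * (T ω * (n : ℝ) ^ (-(1/(3*α)))) := this
          _ = c * (n : ℝ) ^ (-(1/6 : ℝ)) +
              T ω * ((n : ℝ)⁻¹ * (n : ℝ) ^ (-(1 / (3 * α)))) := by ring
      have hhalf : ε / 2 < T ω * ((n : ℝ)⁻¹ * (n : ℝ) ^ (-(1 / (3 * α)))) := by
        have := hn2
        linarith
      -- conclude b ≤ T ω
      show b ≤ T ω
      have hP : (0:ℝ) < (n : ℝ) * (n : ℝ) ^ (1 / (3 * α)) := by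
        have := Real.rpow_pos_of_pos hn0 (1 / (3 * α)); positivity
      have := mul_lt_mul_of_pos_right hhalf hP
      rw [mul_assoc, hinv, mul_one] at this
      rw [hb, id3]
      linarith
    -- Step B : Markov
    have hTmeas : Measurable T :=
      Finset.measurable_sum _ (fun j _ => hmeasu.comp (hmeas j))
    have hTint : Integrable T μ := integrable_finset_sum _ (fun j _ => hintj j)
    have hTnn : 0 ≤ᵐ[μ] T := by
      filter_upwards [hae] with ω hω
      exact Finset.sum_nonneg fun j _ => Real.rpow_nonneg (hω j).le _
    have hTintval : ∫ ω, T ω ∂μ = (n : ℝ) * E := by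
      rw [hT, integral_finset_sum _ (fun j _ => hintj j)]
      simp only [hintegral, Finset.sum_const, Nat.card_Icc, nsmul_eq_mul]
      norm_num
    have hmarkov : μ {ω | b ≤ T ω} ≤
        ENNReal.ofReal ((n : ℝ) * E) / ENNReal.ofReal b := by
      have hsub2 : {ω | b ≤ T ω} ⊆ {ω | ENNReal.ofReal b ≤ ENNReal.ofReal (T ω)} :=
        fun ω hω => ENNReal.ofReal_le_ofReal hω
      refine (measure_mono hsub2).trans ?_
      have := meas_ge_le_lintegral_div (μ := μ)
        (f := fun ω => ENNReal.ofReal (T ω))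
        (hTmeas.ennreal_ofReal.aemeasurable)
        (ε := ENNReal.ofReal b)
        (by simpa [ENNReal.ofReal_eq_zero] using hbpos.not_ge)
        ENNReal.ofReal_ne_top
      refine this.trans ?_
      rw [← ofReal_integral_eq_lintegral_ofReal hTint hTnn, hTintval]
    refine (measure_mono_ae hincl).trans (hmarkov.trans ?_)
    -- Step C : simplify the bound
    have hdiv : (n : ℝ) * E / b = (2 * E / ε) * (n : ℝ) ^ (-(1 / (3 * α))) := by
      rw [hb, Real.rpow_add hn0, Real.rpow_one, Real.rpow_neg hn0.le]
      have hp : (0:ℝ) < (n : ℝ) ^ (1 / (3 * α)) := Real.rpow_pos_of_pos hn0 _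
      field_simp
    rw [← ENNReal.ofReal_div_of_pos hbpos, hdiv]
  -- conclude by squeezing
  have hlim : Tendsto (fun n : ℕ => ENNReal.ofReal ((2 * E / ε) * (n : ℝ) ^ (-(1 / (3 * α)))))
      atTop (nhds 0) := by
    have hreal : Tendsto (fun n : ℕ => (2 * E / ε) * (n : ℝ) ^ (-(1 / (3 * α)))) atTop (nhds 0) := by
      have := (tendsto_rpow_neg_atTop (by positivity : (0:ℝ) < 1 / (3 * α))).comp
        (tendsto_natCast_atTop_atTop (R := ℝ))
      simpa using this.const_mul (2 * E / ε)
    have := ENNReal.tendsto_ofReal hreal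
    simpa using this
  exact tendsto_of_tendsto_of_tendsto_of_le_of_le' tendsto_const_nhds hlim
    (Eventually.of_forall fun n => zero_le) key
end

section
/- Let N, N′: ℕ → ℝ be sequences with N(0) = N′(0) and with dominated increments: N(k) − N(k−1) ≤ N′(k) − N′(k−1) for all k ≥ 1. Define the reflection map φ(X)(k) := X(k) − min(0, min_{0≤j≤k} X(j)). Then φ(N)(k) ≤ φ(N′)(k) for every k ≥ 0. -/
/-- Monotonicity of the one-sided reflection map: if `N(0) = N'(0)` and the increments
of `N` are dominated by those of `N'`, then `φ(N)(k) ≤ φ(N')(k)` for all `k`, where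
`φ(X)(k) = X(k) - min(0, min_{0≤j≤k} X(j))`. -/
theorem reflection_monotone
    (N N' : ℕ → ℝ) (h0 : N 0 = N' 0)
    (hincr : ∀ k : ℕ, N (k + 1) - N k ≤ N' (k + 1) - N' k) :
    ∀ k : ℕ,
      N k - min 0 ((Finset.range (k + 1)).inf'
          ⟨0, Finset.mem_range.mpr (Nat.succ_pos k)⟩ N) ≤
        N' k - min 0 ((Finset.range (k + 1)).inf'
          ⟨0, Finset.mem_range.mpr (Nat.succ_pos k)⟩ N') := by
  intro k
  have hne : (Finset.range (k + 1)).Nonempty :=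
    ⟨0, Finset.mem_range.mpr (Nat.succ_pos k)⟩
  have hanti : Antitone (fun j => N j - N' j) :=
    antitone_nat_of_succ_le (fun n => by have := hincr n; linarith)
  obtain ⟨j0, hj0mem, hj0⟩ := Finset.exists_mem_eq_inf' hne N'
  obtain ⟨j1, hj1mem, hj1⟩ := Finset.exists_mem_eq_inf' hne N
  have hj0k : j0 ≤ k := Nat.lt_succ_iff.mp (Finset.mem_range.mp hj0mem)
  have hj1k : j1 ≤ k := Nat.lt_succ_iff.mp (Finset.mem_range.mp hj1mem)
  have hdk0 : N k - N' k ≤ N 0 - N' 0 := hanti (Nat.zero_le k)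
  have h1 : N k - N' k ≤ N j0 - N' j0 := hanti hj0k
  have h2 : N k - N' k ≤ N j1 - N' j1 := hanti hj1k
  have hinfN'le : (Finset.range (k+1)).inf' hne N' ≤ N' j1 := Finset.inf'_le _ hj1mem
  have hinfNle : (Finset.range (k+1)).inf' hne N ≤ N j0 := Finset.inf'_le _ hj0mem
  rcases le_total 0 ((Finset.range (k+1)).inf' hne N) with hN | hN <;>
    rcases le_total 0 ((Finset.range (k+1)).inf' hne N') with hN' | hN'
  · rw [min_eq_left hN, min_eq_left hN']; linarith
  · rw [min_eq_left hN, min_eq_right hN']; linarith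
  · rw [min_eq_right hN, min_eq_left hN']; linarith
  · rw [min_eq_right hN, min_eq_right hN']; linarith
end

section
/- Let E_1, …, E_n be independent random variables, where E_i is exponentially distributed with rate λ_i > 0, let t ≥ 0, and let Π be a Poisson random variable with mean t·(λ_1 + ⋯ + λ_n). Then Σ_{i=1}^n 1{E_i ≤ t} is stochastically dominated by Π: for every k ∈ ℕ, P(Σ_{i=1}^n 1{E_i ≤ t} ≥ k) ≤ P(Π ≥ k). -/
open MeasureTheory Filter ProbabilityTheory

noncomputable def pF (B : ℝ) (k : ℕ) : ℝ :=
  ∑ m ∈ Finset.range k, Real.exp (-B) * B ^ m / m.factorial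

lemma pF_nonneg {B : ℝ} (hB : 0 ≤ B) (k : ℕ) : 0 ≤ pF B k := by
  apply Finset.sum_nonneg; intro m _; positivity

lemma pF_le_one {B : ℝ} (hB : 0 ≤ B) (k : ℕ) : pF B k ≤ 1 := by
  have h1 : pF B k = Real.exp (-B) * ∑ m ∈ Finset.range k, B ^ m / m.factorial := by
    rw [Finset.mul_sum]; exact Finset.sum_congr rfl fun m _ => by ring
  have h2 := Real.sum_le_exp_of_nonneg hB k
  calc pF B k ≤ Real.exp (-B) * Real.exp B := by
        rw [h1]; exact mul_le_mul_of_nonneg_left h2 (Real.exp_nonneg _)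
    _ = 1 := by rw [← Real.exp_add]; simp

lemma pF_mono {B : ℝ} (hB : 0 ≤ B) {j k : ℕ} (h : j ≤ k) : pF B j ≤ pF B k := by
  apply Finset.sum_le_sum_of_subset_of_nonneg (Finset.range_subset_range.2 h)
  intro m _ _; positivity

lemma pF_key {a A : ℝ} (ha : 0 ≤ a) (hA : 0 ≤ A) (k : ℕ) :
    pF (A + a) (k + 1) ≤ Real.exp (-a) * pF A (k + 1) + (1 - Real.exp (-a)) * pF A k := by
  set g : ℝ → ℕ → ℝ := fun b j => Real.exp (-b) * b ^ j / j.factorial with hg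
  have hconv : ∀ m : ℕ, g (A + a) m = ∑ j ∈ Finset.range (m + 1), g a j * g A (m - j) := by
    intro m
    have hstep : ∑ j ∈ Finset.range (m + 1), g a j * g A (m - j)
        = ∑ j ∈ Finset.range (m + 1),
            Real.exp (-(A + a)) * (a ^ j * A ^ (m - j) * m.choose j) / m.factorial := by
      refine Finset.sum_congr rfl fun j hj => ?_
      have hjm : j ≤ m := Nat.lt_succ_iff.mp (Finset.mem_range.mp hj)
      have hfact : ((m.choose j : ℝ)) * j.factorial * (m - j).factorial = m.factorial := by
        exact_mod_cast Nat.choose_mul_factorial_mul_factorial hjm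
      have h1 : (j.factorial : ℝ) ≠ 0 := Nat.cast_ne_zero.2 j.factorial_ne_zero
      have h2 : ((m - j).factorial : ℝ) ≠ 0 := Nat.cast_ne_zero.2 (m - j).factorial_ne_zero
      have h3 : (m.factorial : ℝ) ≠ 0 := Nat.cast_ne_zero.2 m.factorial_ne_zero
      have hexp : Real.exp (-(A + a)) = Real.exp (-a) * Real.exp (-A) := by
        rw [← Real.exp_add]; ring_nf
      simp only [hg]
      rw [hexp]
      field_simp
      linear_combination (-(a ^ j * A ^ (m - j))) * hfact
    rw [hstep, ← Finset.sum_div, ← Finset.mul_sum, ← add_pow]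
    simp only [hg]
    rw [show a + A = A + a from add_comm a A]
  have hswap : pF (A + a) (k + 1) = ∑ j ∈ Finset.range (k + 1), g a j * pF A (k + 1 - j) := by
    have h0 : pF (A + a) (k + 1) = ∑ m ∈ Finset.range (k + 1),
        ∑ j ∈ Finset.range (m + 1), g a j * g A (m - j) :=
      Finset.sum_congr rfl fun m _ => hconv m
    have h1 := Finset.sum_Ico_Ico_comm 0 (k + 1) (fun i j => g a i * g A (j - i))
    simp only [← Finset.range_eq_Ico] at h1
    rw [h0, ← h1]
    refine Finset.sum_congr rfl fun j hj => ?_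
    rw [Finset.sum_Ico_eq_sum_range,
      show pF A (k + 1 - j) = ∑ m ∈ Finset.range (k + 1 - j), g A m from rfl,
      Finset.mul_sum]
    refine Finset.sum_congr rfl fun m _ => ?_
    congr 2
    omega
  rw [hswap, Finset.sum_range_succ']
  have hg0 : g a 0 = Real.exp (-a) := by simp [hg]
  have hsum1 : ∑ i ∈ Finset.range k, g a (i + 1) ≤ 1 - Real.exp (-a) := by
    have he : pF a (k + 1) = ∑ i ∈ Finset.range k, g a (i + 1) + g a 0 := by
      exact Finset.sum_range_succ' _ _
    have h2 := pF_le_one ha (k + 1)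
    rw [he, hg0] at h2
    linarith
  have hbnd : ∑ i ∈ Finset.range k, g a (i + 1) * pF A (k + 1 - (i + 1))
      ≤ (1 - Real.exp (-a)) * pF A k := by
    calc ∑ i ∈ Finset.range k, g a (i + 1) * pF A (k + 1 - (i + 1))
        ≤ ∑ i ∈ Finset.range k, g a (i + 1) * pF A k := by
          refine Finset.sum_le_sum fun i _ => ?_
          have hgn : 0 ≤ g a (i + 1) := by simp only [hg]; positivity
          exact mul_le_mul_of_nonneg_left (pF_mono hA (by omega)) hgn
      _ = (∑ i ∈ Finset.range k, g a (i + 1)) * pF A k := by rw [Finset.sum_mul]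
      _ ≤ (1 - Real.exp (-a)) * pF A k :=
          mul_le_mul_of_nonneg_right hsum1 (pF_nonneg hA k)
  rw [hg0, Nat.sub_zero]
  linarith [hbnd]

noncomputable def pT (B : ℝ) (k : ℕ) : ENNReal := ENNReal.ofReal (1 - pF B k)

lemma pT_zero (B : ℝ) : pT B 0 = 1 := by
  simp [pT, pF]

lemma pT_eq {B : ℝ} (hB : 0 ≤ B) (k : ℕ) :
    pT B k = 1 - ENNReal.ofReal (pF B k) := by
  rw [pT, ENNReal.ofReal_sub 1 (pF_nonneg hB k), ENNReal.ofReal_one]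

lemma pT_key {a A : ℝ} (ha : 0 ≤ a) (hA : 0 ≤ A) (k : ℕ) :
    ENNReal.ofReal (1 - Real.exp (-a)) * pT A k +
      ENNReal.ofReal (Real.exp (-a)) * pT A (k + 1) ≤ pT (A + a) (k + 1) := by
  have hexp1 : Real.exp (-a) ≤ 1 := by
    calc Real.exp (-a) ≤ Real.exp 0 := Real.exp_le_exp.mpr (by linarith)
      _ = 1 := Real.exp_zero
  have h1 : 0 ≤ 1 - Real.exp (-a) := by linarith
  have h2 : 0 ≤ 1 - pF A k := by linarith [pF_le_one hA k]
  have h3 : 0 ≤ 1 - pF A (k + 1) := by linarith [pF_le_one hA (k + 1)]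
  rw [pT, pT, pT, ← ENNReal.ofReal_mul h1, ← ENNReal.ofReal_mul (Real.exp_nonneg _),
    ← ENNReal.ofReal_add (mul_nonneg h1 h2) (mul_nonneg (Real.exp_nonneg _) h3)]
  apply ENNReal.ofReal_le_ofReal
  nlinarith [pF_key ha hA k]

/-- The number of independent exponential clocks (rates `λ_i > 0`) that ring by time
`t ≥ 0` is stochastically dominated by a Poisson random variable with mean
`t·(λ_1 + ⋯ + λ_n)`: for all `k ∈ ℕ`, `P(Σ_i 1{E_i ≤ t} ≥ k) ≤ P(N ≥ k)`. -/
theorem exponential_count_poisson_domination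
    {Ω : Type*} [MeasurableSpace Ω] (μ : Measure Ω) [IsProbabilityMeasure μ]
    {Ω' : Type*} [MeasurableSpace Ω'] (μ' : Measure Ω') [IsProbabilityMeasure μ']
    (n : ℕ) (E : Fin n → Ω → ℝ) (hmeas : ∀ i, Measurable (E i))
    (hindep : iIndepFun E μ)
    (lam : Fin n → ℝ) (hlam : ∀ i, 0 < lam i)
    (hexp : ∀ i, ∀ s : ℝ, 0 ≤ s →
      μ {ω | s < E i ω} = ENNReal.ofReal (Real.exp (-(lam i * s))))
    (t : ℝ) (ht : 0 ≤ t)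
    (P : Ω' → ℕ) (hPmeas : Measurable P)
    (hP : ∀ m : ℕ, μ' {ω | P ω = m} =
      ENNReal.ofReal (Real.exp (-(t * ∑ i, lam i)) * (t * ∑ i, lam i) ^ m /
        m.factorial)) :
    ∀ k : ℕ,
      μ {ω | (k : ℝ) ≤ ∑ i, (if E i ω ≤ t then (1 : ℝ) else 0)} ≤
        μ' {ω | k ≤ P ω} := by
  intro k
  set a : Fin n → ℝ := fun i => lam i * t with ha_def
  have ha : ∀ i, 0 ≤ a i := fun i => mul_nonneg (hlam i).le ht
  set N : Finset (Fin n) → Ω → ℕ :=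
    fun s ω => ∑ j ∈ s, if E j ω ≤ t then 1 else 0 with hN_def
  have hNmeas : ∀ s : Finset (Fin n), Measurable (N s) := by
    intro s
    apply Finset.measurable_sum
    intro j _
    exact Measurable.ite ((hmeas j) measurableSet_Iic) measurable_const measurable_const
  -- independence of E i and N s for i ∉ s
  have hInd : ∀ (i : Fin n) (s : Finset (Fin n)), i ∉ s →
      ∀ (u : Set ℝ) (v : Set ℕ), MeasurableSet u →
        μ ((E i) ⁻¹' u ∩ (N s) ⁻¹' v) = μ ((E i) ⁻¹' u) * μ ((N s) ⁻¹' v) := by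
    intro i s his u v hu
    have hIF := hindep.indepFun_finset {i} s (Finset.disjoint_singleton_left.2 his) hmeas
    set φ : (↥({i} : Finset (Fin n)) → ℝ) → ℝ :=
      fun w => w ⟨i, Finset.mem_singleton_self i⟩ with hφ_def
    set ψ : (↥s → ℝ) → ℕ :=
      fun w => ∑ j : ↥s, if w j ≤ t then 1 else 0 with hψ_def
    have hφm : Measurable φ := measurable_pi_apply _
    have hψm : Measurable ψ := by
      apply Finset.measurable_sum
      intro j _
      exact Measurable.ite ((measurable_pi_apply j) measurableSet_Iic)
        measurable_const measurable_const
    have hIF2 := hIF.comp hφm hψm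
    have heq1 : (φ ∘ fun ω (j : ↥({i} : Finset (Fin n))) => E j ω) = E i := rfl
    have heq2 : (ψ ∘ fun ω (j : ↥s) => E j ω) = N s := by
      funext ω
      simp only [Function.comp_apply, hψ_def, hN_def]
      exact Finset.sum_coe_sort s (fun j => if E j ω ≤ t then 1 else 0)
    rw [heq1, heq2] at hIF2
    exact (indepFun_iff_measure_inter_preimage_eq_mul.mp hIF2) u v hu .of_discrete
  -- exponential probabilities
  have hIoi : ∀ i : Fin n, μ ((E i) ⁻¹' (Set.Ioi t)) = ENNReal.ofReal (Real.exp (-(a i))) := by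
    intro i
    have := hexp i t ht
    rw [ha_def]
    exact this
  have hIic : ∀ i : Fin n,
      μ ((E i) ⁻¹' (Set.Iic t)) = ENNReal.ofReal (1 - Real.exp (-(a i))) := by
    intro i
    have hc : (E i) ⁻¹' (Set.Iic t) = ((E i) ⁻¹' (Set.Ioi t))ᶜ := by
      ext ω; simp [not_lt]
    rw [hc, measure_compl ((hmeas i) measurableSet_Ioi) (measure_ne_top μ _), hIoi i,
      measure_univ, ENNReal.ofReal_sub 1 (Real.exp_nonneg _), ENNReal.ofReal_one]
  -- main induction
  have key : ∀ s : Finset (Fin n), ∀ k : ℕ, μ {ω | k ≤ N s ω} ≤ pT (∑ j ∈ s, a j) k := by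
    intro s
    induction s using Finset.induction_on with
    | empty =>
      intro k
      cases k with
      | zero =>
        rw [Finset.sum_empty, pT_zero]
        exact prob_le_one
      | succ k =>
        have : {ω | k + 1 ≤ N (∅ : Finset (Fin n)) ω} = ∅ := by
          ext ω; simp [hN_def]
        rw [this]
        simp
    | @insert i s his ih =>
      intro k
      cases k with
      | zero =>
        rw [pT_zero]
        exact prob_le_one
      | succ k =>
        have hset : {ω | k + 1 ≤ N (insert i s) ω} =
            ((E i) ⁻¹' (Set.Iic t) ∩ (N s) ⁻¹' {m | k ≤ m}) ∪
            ((E i) ⁻¹' (Set.Ioi t) ∩ (N s) ⁻¹' {m | k + 1 ≤ m}) := by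
          ext ω
          simp only [Set.mem_setOf_eq, Set.mem_union, Set.mem_inter_iff, Set.mem_preimage,
            Set.mem_Iic, Set.mem_Ioi, hN_def, Finset.sum_insert his]
          by_cases h : E i ω ≤ t
          · simp only [h, if_true, iff_true_intro h, not_lt.mpr h]
            simp only [true_and, false_and, or_false, not_lt.mpr h, iff_false,
              Set.mem_setOf_eq]
            omega
          · simp only [h, if_false, not_le.mp h]
            simp only [false_and, true_and, false_or, iff_false, not_le.mp h]
            omega
        have hdisj : Disjoint ((E i) ⁻¹' (Set.Iic t) ∩ (N s) ⁻¹' {m | k ≤ m})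
            ((E i) ⁻¹' (Set.Ioi t) ∩ (N s) ⁻¹' {m | k + 1 ≤ m}) := by
          rw [Set.disjoint_left]
          rintro ω ⟨h1, -⟩ ⟨h2, -⟩
          have h1' : E i ω ≤ t := h1
          have h2' : t < E i ω := h2
          linarith
        have hm2 : MeasurableSet ((E i) ⁻¹' (Set.Ioi t) ∩ (N s) ⁻¹' {m | k + 1 ≤ m}) :=
          ((hmeas i) measurableSet_Ioi).inter ((hNmeas s) .of_discrete)
        rw [hset, measure_union hdisj hm2, hInd i s his _ _ measurableSet_Iic,
          hInd i s his _ _ measurableSet_Ioi, hIic i, hIoi i]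
        have goal2 : ENNReal.ofReal (1 - Real.exp (-(a i))) * μ ((N s) ⁻¹' {m | k ≤ m}) +
            ENNReal.ofReal (Real.exp (-(a i))) * μ ((N s) ⁻¹' {m | k + 1 ≤ m}) ≤
            pT ((∑ j ∈ s, a j) + a i) (k + 1) := by
          refine le_trans (add_le_add
            (mul_le_mul_right (ih k) _)
            (mul_le_mul_right (ih (k + 1)) _)) ?_
          exact pT_key (ha i) (Finset.sum_nonneg fun j _ => ha j) k
        refine le_trans goal2 ?_
        rw [Finset.sum_insert his, add_comm (a i)]
  -- identify the LHS set
  have hLHS : {ω | (k : ℝ) ≤ ∑ i, (if E i ω ≤ t then (1 : ℝ) else 0)} =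
      {ω | k ≤ N Finset.univ ω} := by
    ext ω
    simp only [Set.mem_setOf_eq, hN_def]
    have : (∑ i, (if E i ω ≤ t then (1 : ℝ) else 0)) =
        ((∑ j, if E j ω ≤ t then 1 else 0 : ℕ) : ℝ) := by
      push_cast [apply_ite]
      rfl
    rw [this]
    exact_mod_cast Iff.rfl
  -- compute the RHS
  set B : ℝ := t * ∑ i, lam i with hB_def
  have hB : 0 ≤ B := mul_nonneg ht (Finset.sum_nonneg fun i _ => (hlam i).le)
  have hRHS : μ' {ω | k ≤ P ω} = pT B k := by
    have hlt : {ω | P ω < k} = ⋃ m ∈ Finset.range k, {ω | P ω = m} := by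
      ext ω
      simp only [Set.mem_setOf_eq, Set.mem_iUnion, Finset.mem_range, exists_prop]
      exact ⟨fun h => ⟨P ω, h, rfl⟩, fun ⟨m, hm, he⟩ => he ▸ hm⟩
    have hmeasP : ∀ m : ℕ, MeasurableSet {ω | P ω = m} := fun m =>
      hPmeas (MeasurableSet.singleton m)
    have hdisjP : (Finset.range k : Set ℕ).PairwiseDisjoint (fun m => {ω | P ω = m}) := by
      intro x _ y _ hxy
      rw [Function.onFun, Set.disjoint_left]
      rintro ω h1 h2
      exact hxy (h1.symm.trans h2)
    have hμlt : μ' {ω | P ω < k} = ENNReal.ofReal (pF B k) := by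
      rw [hlt, measure_biUnion_finset hdisjP (fun m _ => hmeasP m)]
      unfold pF
      rw [ENNReal.ofReal_sum_of_nonneg (fun m _ => by positivity)]
      exact Finset.sum_congr rfl fun m _ => hP m
    have hcompl : {ω | k ≤ P ω} = {ω | P ω < k}ᶜ := by
      ext ω; simp [not_lt]
    rw [hcompl, measure_compl (by
        have : {ω | P ω < k} = ⋃ m ∈ Finset.range k, {ω | P ω = m} := hlt
        rw [this]
        exact MeasurableSet.biUnion (Finset.range k).countable_toSet fun m _ => hmeasP m)
      (measure_ne_top μ' _), measure_univ, hμlt, pT_eq hB]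
  rw [hLHS, hRHS]
  have := key Finset.univ k
  have hsum : ∑ j, a j = B := by
    rw [hB_def, Finset.mul_sum]
    exact Finset.sum_congr rfl fun j _ => mul_comm _ _
  rwa [hsum] at this
end

section
/- Let (S_i)_{i≥1} be independent, identically distributed, strictly positive random variables with E[S_1] < ∞ and common distribution function F, let p ∈ (0,1), and suppose ξ_p is the unique real with F(ξ_p) = p and that F is continuous and strictly increasing in a neighborhood of ξ_p. Let S_{(1)} ≤ ⋯ ≤ S_{(n)} denote the order statistics (nondecreasing rearrangement) of S_1, …, S_n. Then (1/n)·|Σ_{j=1}^n S_j·1{S_j ≤ ξ_p} − Σ_{j=1}^n S_j·1{S_j ≤ S_{(⌊pn⌋)}}| → 0 almost surely as n → ∞. -/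
open MeasureTheory Filter ProbabilityTheory

open scoped Classical in
/-- `orderStatEmp S n k ω` is the `k`-th order statistic (k-th smallest value) of
`S_1(ω), …, S_n(ω)`, defined as the empirical quantile
`inf {x | #{1 ≤ i ≤ n : S_i(ω) ≤ x} ≥ k}`. -/
noncomputable def orderStatEmp {Ω : Type*} (S : ℕ → Ω → ℝ) (n k : ℕ) (ω : Ω) : ℝ :=
  sInf {x : ℝ | k ≤ ((Finset.Icc 1 n).filter (fun i => S i ω ≤ x)).card}

private lemma sum_range_shift (f : ℕ → ℝ) (n : ℕ) :
    ∑ i ∈ Finset.range n, f (i + 1) = ∑ j ∈ Finset.Icc 1 n, f j := by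
  induction n with
  | zero => simp
  | succ n ih =>
      rw [Finset.sum_range_succ, ih, Finset.sum_Icc_succ_top (by omega)]

private lemma slln_point {Ω : Type*} [MeasurableSpace Ω] (μ : Measure Ω)
    [IsProbabilityMeasure μ]
    (S : ℕ → Ω → ℝ) (hmeas : ∀ i, Measurable (S i))
    (hindep : iIndepFun S μ)
    (hident : ∀ i, IdentDistrib (S i) (S 1) μ μ)
    (F : ℝ → ℝ) (hF : ∀ t, F t = (μ {ω | S 1 ω ≤ t}).toReal) (t : ℝ) :
    ∀ᵐ ω ∂μ, Tendsto
      (fun n : ℕ => (∑ j ∈ Finset.Icc 1 n, (if S j ω ≤ t then (1:ℝ) else 0)) / n)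
      atTop (nhds (F t)) := by
  set φ : ℝ → ℝ := fun x => if x ≤ t then 1 else 0 with hφdef
  have hφ : Measurable φ := by
    apply Measurable.ite ?_ measurable_const measurable_const
    exact measurableSet_Iic
  set X : ℕ → Ω → ℝ := fun i => φ ∘ S (i + 1) with hXdef
  have hX0 : X 0 = Set.indicator {ω | S 1 ω ≤ t} (fun _ => (1:ℝ)) := by
    ext ω
    simp [X, φ, Set.indicator_apply]
  have hA : MeasurableSet {ω | S 1 ω ≤ t} := (hmeas 1) measurableSet_Iic
  have hint0 : Integrable (X 0) μ := by
    rw [hX0]; exact (integrable_const (1:ℝ)).indicator hA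
  have hindep' : Pairwise (Function.onFun (IndepFun · · μ) X) := by
    intro i j hij
    exact (hindep.comp (fun _ => φ) (fun _ => hφ)).indepFun
      (show i + 1 ≠ j + 1 by omega)
  have hident' : ∀ i, IdentDistrib (X i) (X 0) μ μ := fun i =>
    (hident (i + 1)).comp hφ
  have hμ : μ[X 0] = F t := by
    rw [hX0, integral_indicator_const (1:ℝ) hA, hF t, smul_eq_mul, mul_one, measureReal_def]
  filter_upwards [strong_law_ae X hint0 hindep' hident'] with ω hω
  rw [hμ] at hω
  convert hω using 2 with n
  rw [smul_eq_mul, ← sum_range_shift (fun j => if S j ω ≤ t then (1:ℝ) else 0) n]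
  rw [div_eq_inv_mul]
  rfl

/-- For i.i.d. positive integrable `(S_i)` whose distribution function `F` has a
unique `p`-th quantile `ξ_p` near which `F` is continuous and strictly increasing,
`(1/n)·|Σ_{j≤n} S_j·1{S_j ≤ ξ_p} − Σ_{j≤n} S_j·1{S_j ≤ S_(⌊pn⌋)}| → 0` a.s. -/
theorem truncated_sum_at_sample_quantile
    {Ω : Type*} [MeasurableSpace Ω] (μ : Measure Ω) [IsProbabilityMeasure μ]
    (S : ℕ → Ω → ℝ) (hmeas : ∀ i, Measurable (S i))
    (hindep : iIndepFun S μ)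
    (hident : ∀ i, IdentDistrib (S i) (S 1) μ μ)
    (hpos : ∀ i, ∀ᵐ ω ∂μ, 0 < S i ω)
    (hint : Integrable (S 1) μ)
    (F : ℝ → ℝ) (hF : ∀ t, F t = (μ {ω | S 1 ω ≤ t}).toReal)
    (p : ℝ) (hp0 : 0 < p) (hp1 : p < 1)
    (ξ : ℝ) (hξ : F ξ = p) (huniq : ∀ x, F x = p → x = ξ)
    (hreg : ∃ δ > 0, ContinuousOn F (Set.Ioo (ξ - δ) (ξ + δ)) ∧
      StrictMonoOn F (Set.Ioo (ξ - δ) (ξ + δ))) :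
    ∀ᵐ ω ∂μ,
      Tendsto
        (fun n : ℕ =>
          (1 / (n : ℝ)) *
            |(∑ j ∈ Finset.Icc 1 n, (if S j ω ≤ ξ then S j ω else 0)) -
              ∑ j ∈ Finset.Icc 1 n,
                (if S j ω ≤ orderStatEmp S n ⌊p * (n : ℝ)⌋₊ ω then S j ω else 0)|)
        atTop (nhds 0) := by
  obtain ⟨δ, hδpos, hcont, hmono⟩ := hreg
  have hAE : ∀ᵐ ω ∂μ, ∀ k : ℕ,
      Tendsto (fun n : ℕ => (∑ j ∈ Finset.Icc 1 n,
        (if S j ω ≤ ξ - δ / (k + 2) then (1:ℝ) else 0)) / n) atTop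
        (nhds (F (ξ - δ / (k + 2)))) ∧
      Tendsto (fun n : ℕ => (∑ j ∈ Finset.Icc 1 n,
        (if S j ω ≤ ξ + δ / (k + 2) then (1:ℝ) else 0)) / n) atTop
        (nhds (F (ξ + δ / (k + 2)))) := by
    rw [MeasureTheory.ae_all_iff]
    intro k
    exact (slln_point μ S hmeas hindep hident F hF _).and
      (slln_point μ S hmeas hindep hident F hF _)
  have hfloor : Tendsto (fun n : ℕ => (⌊p * (n:ℝ)⌋₊ : ℝ) / n) atTop (nhds p) :=
    (tendsto_nat_floor_mul_div_atTop hp0.le).comp tendsto_natCast_atTop_atTop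
  have hfloorTop : Tendsto (fun n : ℕ => ⌊p * (n:ℝ)⌋₊) atTop atTop :=
    tendsto_nat_floor_mul_atTop p hp0
  filter_upwards [hAE] with ω hω
  rw [Metric.tendsto_atTop]
  intro η hη
  set C : ℝ := |ξ| + δ with hCdef
  have hCpos : 0 < C := by positivity
  have hξmem : ξ ∈ Set.Ioo (ξ - δ) (ξ + δ) := by constructor <;> linarith
  have hcontξ : ContinuousAt F ξ :=
    (hcont.continuousAt (Ioo_mem_nhds (by linarith) (by linarith)))
  -- choose k with C * (F(ξ+εk) - F(ξ-εk)) < η/2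
  have hε0 : Tendsto (fun k : ℕ => δ / ((k:ℝ) + 2)) atTop (nhds 0) := by
    apply Tendsto.div_atTop tendsto_const_nhds
    exact tendsto_atTop_add_const_right _ 2 tendsto_natCast_atTop_atTop
  have hFk : Tendsto (fun k : ℕ => C * (F (ξ + δ / ((k:ℝ) + 2)) - F (ξ - δ / ((k:ℝ) + 2))))
      atTop (nhds (C * (F ξ - F ξ))) := by
    apply Tendsto.const_mul
    apply Tendsto.sub
    · exact hcontξ.tendsto.comp (by simpa using tendsto_const_nhds.add hε0)
    · exact hcontξ.tendsto.comp (by simpa using tendsto_const_nhds.sub hε0)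
  obtain ⟨k, hk⟩ := (hFk.eventually_lt_const
    (show C * (F ξ - F ξ) < η / 2 by simp; positivity)).exists
  set ε : ℝ := δ / ((k:ℝ) + 2) with hεdef
  have hεpos : 0 < ε := by positivity
  have hεδ : ε < δ := by
    rw [hεdef, div_lt_iff₀ (by positivity)]
    nlinarith
  have hmem₁ : ξ - ε ∈ Set.Ioo (ξ - δ) (ξ + δ) := by constructor <;> linarith
  have hmem₂ : ξ + ε ∈ Set.Ioo (ξ - δ) (ξ + δ) := by constructor <;> linarith
  have hFa : F (ξ - ε) < p := by
    have := hmono hmem₁ hξmem (by linarith)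
    linarith [hξ ▸ this]
  have hFb : p < F (ξ + ε) := by
    have := hmono hξmem hmem₂ (by linarith)
    linarith [hξ ▸ this]
  obtain ⟨hA, hB⟩ := hω k
  have E1 : ∀ᶠ n : ℕ in atTop,
      (∑ j ∈ Finset.Icc 1 n, (if S j ω ≤ ξ - ε then (1:ℝ) else 0)) / n
        < (⌊p * (n:ℝ)⌋₊ : ℝ) / n :=
    hA.eventually_lt hfloor hFa
  have E2 : ∀ᶠ n : ℕ in atTop,
      p < (∑ j ∈ Finset.Icc 1 n, (if S j ω ≤ ξ + ε then (1:ℝ) else 0)) / n :=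
    hB.eventually_const_lt hFb
  have E3 : ∀ᶠ n : ℕ in atTop, 1 ≤ ⌊p * (n:ℝ)⌋₊ := hfloorTop.eventually_ge_atTop 1
  have E4 : ∀ᶠ n : ℕ in atTop,
      C * ((∑ j ∈ Finset.Icc 1 n, (if S j ω ≤ ξ + ε then (1:ℝ) else 0)) / n
        - (∑ j ∈ Finset.Icc 1 n, (if S j ω ≤ ξ - ε then (1:ℝ) else 0)) / n) < η := by
    apply Tendsto.eventually_lt_const
    · show C * (F (ξ + ε) - F (ξ - ε)) < η
      nlinarith [hk, hη]
    · exact (hB.sub hA).const_mul C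
  have E5 : ∀ᶠ n : ℕ in atTop, 1 ≤ n := eventually_ge_atTop 1
  have main : ∀ᶠ n : ℕ in atTop,
      dist ((1 / (n : ℝ)) *
        |(∑ j ∈ Finset.Icc 1 n, (if S j ω ≤ ξ then S j ω else 0)) -
          ∑ j ∈ Finset.Icc 1 n,
            (if S j ω ≤ orderStatEmp S n ⌊p * (n : ℝ)⌋₊ ω then S j ω else 0)|) 0 < η := by
    filter_upwards [E1, E2, E3, E4, E5] with n h1 h2 h3 h4 h5
    have hn : (0:ℝ) < n := by exact_mod_cast h5
    set k₀ : ℕ := ⌊p * (n:ℝ)⌋₊ with hk₀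
    -- counts as naturals
    have hcnt : ∀ x : ℝ, (∑ j ∈ Finset.Icc 1 n, (if S j ω ≤ x then (1:ℝ) else 0))
        = (((Finset.Icc 1 n).filter (fun i => S i ω ≤ x)).card : ℝ) := by
      intro x; rw [Finset.sum_boole]
    have ha' : ((((Finset.Icc 1 n).filter (fun i => S i ω ≤ ξ - ε)).card : ℝ)) < k₀ := by
      rw [← hcnt]
      have := (div_lt_div_iff_of_pos_right hn).mp h1
      exact this
    have hb' : (k₀ : ℝ) < (((Finset.Icc 1 n).filter (fun i => S i ω ≤ ξ + ε)).card : ℝ) := by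
      have h6 : (k₀ : ℝ) ≤ p * n := Nat.floor_le (by positivity)
      have h7 : p * n < ∑ j ∈ Finset.Icc 1 n, (if S j ω ≤ ξ + ε then (1:ℝ) else 0) :=
        (lt_div_iff₀ hn).mp h2
      rw [← hcnt]; linarith
    have haN : ((Finset.Icc 1 n).filter (fun i => S i ω ≤ ξ - ε)).card < k₀ := by
      exact_mod_cast ha'
    have hbN : k₀ ≤ ((Finset.Icc 1 n).filter (fun i => S i ω ≤ ξ + ε)).card := by
      exact_mod_cast hb'.le
    -- the empirical quantile lies in [ξ - ε, ξ + ε]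
    classical
    set T : Set ℝ := {x : ℝ | k₀ ≤ ((Finset.Icc 1 n).filter (fun i => S i ω ≤ x)).card}
      with hTdef
    have hmemT : (ξ + ε) ∈ T := hbN
    have hlb : ∀ x ∈ T, ξ - ε ≤ x := by
      intro x hx
      by_contra hcon
      push_neg at hcon
      have hsub : (Finset.Icc 1 n).filter (fun i => S i ω ≤ x)
          ⊆ (Finset.Icc 1 n).filter (fun i => S i ω ≤ ξ - ε) :=
        Finset.monotone_filter_right _ (fun i _ hi => le_trans hi hcon.le)
      have := Finset.card_le_card hsub
      have hx' : k₀ ≤ ((Finset.Icc 1 n).filter (fun i => S i ω ≤ x)).card := hx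
      omega
    have hQmem : orderStatEmp S n k₀ ω ∈ Set.Icc (ξ - ε) (ξ + ε) := by
      constructor
      · exact le_csInf ⟨ξ + ε, hmemT⟩ hlb
      · exact csInf_le ⟨ξ - ε, hlb⟩ hmemT
    set Q : ℝ := orderStatEmp S n k₀ ω with hQ
    obtain ⟨hQ1, hQ2⟩ := hQmem
    have hξabs1 := le_abs_self ξ
    have hξabs2 := neg_abs_le ξ
    have key : ∀ j ∈ Finset.Icc 1 n,
        |(if S j ω ≤ ξ then S j ω else 0) - (if S j ω ≤ Q then S j ω else 0)|
          ≤ C * ((if S j ω ≤ ξ + ε then (1:ℝ) else 0) - (if S j ω ≤ ξ - ε then (1:ℝ) else 0)) := by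
      intro j _
      split_ifs with hv1 hv2 hv3 hv4 hv3 hv4 hv2 hv3 hv4 hv3 hv4 <;>
        simp only [sub_self, sub_zero, zero_sub, abs_neg, abs_zero, mul_zero, mul_one] <;>
        first
          | positivity
          | (rw [abs_le]; constructor <;> linarith)
          | linarith
    have hsum : |(∑ j ∈ Finset.Icc 1 n, (if S j ω ≤ ξ then S j ω else 0)) -
          ∑ j ∈ Finset.Icc 1 n, (if S j ω ≤ Q then S j ω else 0)|
        ≤ C * ((∑ j ∈ Finset.Icc 1 n, (if S j ω ≤ ξ + ε then (1:ℝ) else 0))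
          - (∑ j ∈ Finset.Icc 1 n, (if S j ω ≤ ξ - ε then (1:ℝ) else 0))) := by
      rw [← Finset.sum_sub_distrib, ← Finset.sum_sub_distrib, Finset.mul_sum]
      exact (Finset.abs_sum_le_sum_abs _ _).trans (Finset.sum_le_sum key)
    rw [Real.dist_0_eq_abs, abs_of_nonneg (by positivity)]
    calc (1 / (n:ℝ)) * |(∑ j ∈ Finset.Icc 1 n, (if S j ω ≤ ξ then S j ω else 0)) -
          ∑ j ∈ Finset.Icc 1 n, (if S j ω ≤ Q then S j ω else 0)|
        ≤ (1 / (n:ℝ)) * (C * ((∑ j ∈ Finset.Icc 1 n, (if S j ω ≤ ξ + ε then (1:ℝ) else 0))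
            - (∑ j ∈ Finset.Icc 1 n, (if S j ω ≤ ξ - ε then (1:ℝ) else 0)))) :=
          mul_le_mul_of_nonneg_left hsum (by positivity)
      _ = C * ((∑ j ∈ Finset.Icc 1 n, (if S j ω ≤ ξ + ε then (1:ℝ) else 0)) / n
            - (∑ j ∈ Finset.Icc 1 n, (if S j ω ≤ ξ - ε then (1:ℝ) else 0)) / n) := by ring
      _ < η := h4
  exact eventually_atTop.mp main
end

section
/- Let (S_i)_{i≥1} be independent, identically distributed, strictly positive random variables with E[S_1] < ∞ and common distribution function F, let p ∈ (0,1), and suppose ξ_p is the unique real with F(ξ_p) = p and that F is continuous and strictly increasing in a neighborhood of ξ_p. Let S_{(1)} ≤ ⋯ ≤ S_{(n)} denote the order statistics (nondecreasing rearrangement) of S_1, …, S_n. Then (1/n)·Σ_{j=1}^{⌊pn⌋} S_{(j)} → E[S_1·1{S_1 ≤ ξ_p}] almost surely as n → ∞. -/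
open MeasureTheory Filter ProbabilityTheory
open scoped Topology

/-! ### Deterministic lemmas about sorted lists -/

private lemma sorted_getElem_le {l : List ℝ} (hl : l.Pairwise (· ≤ ·)) {i j : ℕ}
    (hi : i < l.length) (hj : j < l.length) (hij : i ≤ j) : l[i] ≤ l[j] :=
  hl.rel_get_of_le (a := ⟨i, hi⟩) (b := ⟨j, hj⟩) hij

private lemma countP_ge_iff {l : List ℝ} (hl : l.Pairwise (· ≤ ·)) {j : ℕ}
    (hj : j < l.length) (x : ℝ) :
    j + 1 ≤ l.countP (fun s => decide (s ≤ x)) ↔ l[j] ≤ x := by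
  constructor
  · intro h
    by_contra hx
    push_neg at hx
    have hsplit : l.countP (fun s => decide (s ≤ x))
        = (l.take j).countP (fun s => decide (s ≤ x))
          + (l.drop j).countP (fun s => decide (s ≤ x)) := by
      conv_lhs => rw [← List.take_append_drop j l]
      exact List.countP_append
    have h0 : (l.drop j).countP (fun s => decide (s ≤ x)) = 0 := by
      rw [List.countP_eq_zero]
      intro a ha
      obtain ⟨i, hi, rfl⟩ := List.mem_iff_getElem.1 ha
      rw [List.getElem_drop]
      simp only [decide_eq_true_eq, not_le]
      have hji : j + i < l.length := by
        have : (l.drop j).length = l.length - j := List.length_drop; omega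
      exact lt_of_lt_of_le hx (sorted_getElem_le hl hj hji (by omega))
    have hle : (l.take j).countP (fun s => decide (s ≤ x)) ≤ j := by
      refine le_trans List.countP_le_length ?_
      rw [List.length_take]; omega
    omega
  · intro h
    have hlen : (l.take (j + 1)).length = j + 1 := by
      rw [List.length_take]; omega
    have htake : (l.take (j + 1)).countP (fun s => decide (s ≤ x)) = j + 1 := by
      have hall : ∀ a ∈ l.take (j + 1), (fun s => decide (s ≤ x)) a = true := by
        intro a ha
        obtain ⟨i, hi, rfl⟩ := List.mem_iff_getElem.1 ha
        simp only [List.getElem_take, decide_eq_true_eq]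
        have hi' : i < l.length := by rw [hlen] at hi; omega
        exact le_trans (sorted_getElem_le hl hi' hj (by rw [hlen] at hi; omega)) h
      rw [List.countP_eq_length.2 hall]
      exact hlen
    have hsplit : l.countP (fun s => decide (s ≤ x))
        = (l.take (j + 1)).countP (fun s => decide (s ≤ x))
          + (l.drop (j + 1)).countP (fun s => decide (s ≤ x)) := by
      conv_lhs => rw [← List.take_append_drop (j + 1) l]
      exact List.countP_append
    omega

private lemma map_sum_eq_range (f : ℝ → ℝ) (l : List ℝ) :
    (l.map f).sum = ∑ i ∈ Finset.range l.length, f (l.getD i 0) := by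
  conv_lhs => rw [← List.ofFn_get l, List.map_ofFn, List.sum_ofFn]
  rw [← Fin.sum_univ_eq_sum_range (fun i => f (l.getD i 0)) l.length]
  refine Finset.sum_congr rfl fun i _ => ?_
  simp [Function.comp, List.getD_eq_getElem _ _ i.isLt]

private lemma sorted_identity {l : List ℝ} (hl : l.Pairwise (· ≤ ·)) {k : ℕ}
    (hk1 : 1 ≤ k) (hk : k ≤ l.length) :
    (l.map (fun s => max (l.getD (k - 1) 0 - s) 0)).sum
      = k * l.getD (k - 1) 0 - ∑ j ∈ Finset.range k, l.getD j 0 := by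
  have hk1' : k - 1 < l.length := by omega
  set t := l.getD (k - 1) 0 with ht
  rw [map_sum_eq_range]
  have hsplit : Finset.range l.length = Finset.Ico 0 k ∪ Finset.Ico k l.length := by
    rw [Finset.range_eq_Ico, ← Finset.Ico_union_Ico_eq_Ico (Nat.zero_le k) hk]
  rw [hsplit, Finset.sum_union (Finset.Ico_disjoint_Ico_consecutive 0 k l.length)]
  have h1 : ∑ i ∈ Finset.Ico 0 k, max (t - l.getD i 0) 0
      = ∑ i ∈ Finset.Ico 0 k, (t - l.getD i 0) := by
    refine Finset.sum_congr rfl fun i hi => ?_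
    rw [Finset.mem_Ico] at hi
    have hi' : i < l.length := by omega
    have : l.getD i 0 ≤ t := by
      rw [ht, List.getD_eq_getElem _ _ hi', List.getD_eq_getElem _ _ hk1']
      exact sorted_getElem_le hl hi' hk1' (by omega)
    rw [max_eq_left (by linarith)]
  have h2 : ∑ i ∈ Finset.Ico k l.length, max (t - l.getD i 0) 0 = 0 := by
    refine Finset.sum_eq_zero fun i hi => ?_
    rw [Finset.mem_Ico] at hi
    have hi' : i < l.length := hi.2
    have : t ≤ l.getD i 0 := by
      rw [ht, List.getD_eq_getElem _ _ hi', List.getD_eq_getElem _ _ hk1']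
      exact sorted_getElem_le hl hk1' hi' (by omega)
    rw [max_eq_right (by linarith)]
  rw [h1, h2, add_zero, Finset.sum_sub_distrib, Finset.sum_const, Nat.card_Ico,
    Nat.sub_zero, nsmul_eq_mul, ← Finset.range_eq_Ico]

/-! ### The sorted list of sample values -/

noncomputable def sortedList {Ω : Type*} (S : ℕ → Ω → ℝ) (n : ℕ) (ω : Ω) : List ℝ :=
  Multiset.sort ((Finset.Icc 1 n).val.map (fun i => S i ω)) (· ≤ ·)

lemma sortedList_sorted {Ω : Type*} (S : ℕ → Ω → ℝ) (n : ℕ) (ω : Ω) :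
    (sortedList S n ω).Pairwise (· ≤ ·) :=
  Multiset.pairwise_sort _ _

lemma sortedList_coe {Ω : Type*} (S : ℕ → Ω → ℝ) (n : ℕ) (ω : Ω) :
    (↑(sortedList S n ω) : Multiset ℝ) = (Finset.Icc 1 n).val.map (fun i => S i ω) :=
  Multiset.sort_eq _ _

lemma sortedList_length {Ω : Type*} (S : ℕ → Ω → ℝ) (n : ℕ) (ω : Ω) :
    (sortedList S n ω).length = n := by
  have := congrArg Multiset.card (sortedList_coe S n ω)
  simpa using this

open scoped Classical in
lemma card_filter_eq_countP {Ω : Type*} (S : ℕ → Ω → ℝ) (n : ℕ) (ω : Ω) (x : ℝ) :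
    ((Finset.Icc 1 n).filter (fun i => S i ω ≤ x)).card
      = (sortedList S n ω).countP (fun s => decide (s ≤ x)) := by
  calc ((Finset.Icc 1 n).filter (fun i => S i ω ≤ x)).card
      = Multiset.card ((Finset.Icc 1 n).val.filter (fun i => S i ω ≤ x)) := rfl
    _ = Multiset.countP (fun s => s ≤ x) ((Finset.Icc 1 n).val.map (fun i => S i ω)) := by
        rw [Multiset.countP_map]
    _ = Multiset.countP (fun s => s ≤ x) (↑(sortedList S n ω) : Multiset ℝ) := by
        rw [sortedList_coe]
    _ = (sortedList S n ω).countP (fun s => decide (s ≤ x)) := Multiset.coe_countP _ _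

open scoped Classical in
lemma orderStatEmp_eq_sorted {Ω : Type*} (S : ℕ → Ω → ℝ) {n k : ℕ} (ω : Ω)
    (hk1 : 1 ≤ k) (hkn : k ≤ n) :
    orderStatEmp S n k ω = (sortedList S n ω).getD (k - 1) 0 := by
  have hlen := sortedList_length S n ω
  have hsort := sortedList_sorted S n ω
  have hj : k - 1 < (sortedList S n ω).length := by omega
  have hset : {x : ℝ | k ≤ ((Finset.Icc 1 n).filter (fun i => S i ω ≤ x)).card}
      = Set.Ici ((sortedList S n ω).getD (k - 1) 0) := by
    ext x
    simp only [Set.mem_setOf_eq, Set.mem_Ici]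
    rw [card_filter_eq_countP S n ω x, List.getD_eq_getElem _ _ hj]
    have := countP_ge_iff hsort hj x
    constructor
    · intro h; exact this.1 (by omega)
    · intro h; have := this.2 h; omega
  rw [orderStatEmp, hset, csInf_Ici]

open scoped Classical in
lemma orderStatEmp_bounds {Ω : Type*} (S : ℕ → Ω → ℝ) {n k : ℕ} (ω : Ω) {a b : ℝ}
    (ha : ((Finset.Icc 1 n).filter (fun i => S i ω ≤ a)).card < k)
    (hb : k ≤ ((Finset.Icc 1 n).filter (fun i => S i ω ≤ b)).card) :
    a ≤ orderStatEmp S n k ω ∧ orderStatEmp S n k ω ≤ b := by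
  have hmono : ∀ x y : ℝ, x ≤ y →
      ((Finset.Icc 1 n).filter (fun i => S i ω ≤ x)).card
        ≤ ((Finset.Icc 1 n).filter (fun i => S i ω ≤ y)).card := by
    intro x y hxy
    exact Finset.card_le_card (Finset.monotone_filter_right _ (fun i _ hi => le_trans hi hxy))
  have hlb : ∀ z ∈ {x : ℝ | k ≤ ((Finset.Icc 1 n).filter (fun i => S i ω ≤ x)).card}, a ≤ z := by
    intro z hz
    by_contra hza
    push_neg at hza
    have := hmono z a hza.le
    simp only [Set.mem_setOf_eq] at hz
    omega
  constructor
  · exact le_csInf ⟨b, hb⟩ hlb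
  · exact csInf_le ⟨a, hlb⟩ hb

open scoped Classical in
lemma key_identity {Ω : Type*} (S : ℕ → Ω → ℝ) {n k : ℕ} (ω : Ω)
    (hk1 : 1 ≤ k) (hkn : k ≤ n) :
    ∑ j ∈ Finset.Icc 1 k, orderStatEmp S n j ω
      = k * orderStatEmp S n k ω
        - ∑ i ∈ Finset.Icc 1 n, max (orderStatEmp S n k ω - S i ω) 0 := by
  set l := sortedList S n ω with hl
  have hlen := sortedList_length S n ω
  have hsort := sortedList_sorted S n ω
  have hLHS : ∑ j ∈ Finset.Icc 1 k, orderStatEmp S n j ω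
      = ∑ i ∈ Finset.range k, l.getD i 0 := by
    rw [← Finset.Ico_add_one_right_eq_Icc, Finset.sum_Ico_eq_sum_range]
    try simp only [Nat.add_sub_cancel]
    refine Finset.sum_congr rfl fun i hi => ?_
    rw [Finset.mem_range] at hi
    rw [orderStatEmp_eq_sorted S ω (by omega) (by omega)]
    congr 1
    omega
  have hRHS : ∑ i ∈ Finset.Icc 1 n, max (orderStatEmp S n k ω - S i ω) 0
      = (l.map (fun s => max (l.getD (k - 1) 0 - s) 0)).sum := by
    rw [orderStatEmp_eq_sorted S ω hk1 hkn]
    rw [Finset.sum_eq_multiset_sum]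
    have : (Finset.Icc 1 n).val.map (fun i => max (l.getD (k - 1) 0 - S i ω) 0)
        = Multiset.map (fun s => max (l.getD (k - 1) 0 - s) 0)
            ((Finset.Icc 1 n).val.map (fun i => S i ω)) := by
      rw [Multiset.map_map]; rfl
    rw [this, ← sortedList_coe S n ω, ← hl, Multiset.map_coe, Multiset.sum_coe]
  rw [hLHS, hRHS, sorted_identity hsort hk1 (by omega),
    orderStatEmp_eq_sorted S ω hk1 hkn]
  ring

/-! ### Strong law of large numbers for `f ∘ S i`, sums over `Icc 1 n` -/

lemma slln_Icc {Ω : Type*} [MeasurableSpace Ω] (μ : Measure Ω) [IsProbabilityMeasure μ]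
    (S : ℕ → Ω → ℝ) (hmeas : ∀ i, Measurable (S i))
    (hindep : iIndepFun S μ)
    (hident : ∀ i, IdentDistrib (S i) (S 1) μ μ)
    (f : ℝ → ℝ) (hf : Measurable f) (hfi : Integrable (fun ω => f (S 1 ω)) μ) :
    ∀ᵐ ω ∂μ, Tendsto (fun n : ℕ => (∑ i ∈ Finset.Icc 1 n, f (S i ω)) / n) atTop
      (𝓝 (∫ ω, f (S 1 ω) ∂μ)) := by
  have h := strong_law_ae_real (fun i ω => f (S (i + 1) ω)) hfi
    (fun i j hij => ((hindep.indepFun (by omega : i + 1 ≠ j + 1)).comp hf hf))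
    (fun i => ((hident (i + 1)).comp hf))
  filter_upwards [h] with ω hω
  have : ∀ n : ℕ, ∑ i ∈ Finset.range n, f (S (i + 1) ω) = ∑ i ∈ Finset.Icc 1 n, f (S i ω) := by
    intro n
    rw [← Finset.Ico_add_one_right_eq_Icc, Finset.sum_Ico_eq_sum_range]
    try simp only [Nat.add_sub_cancel]
    exact Finset.sum_congr rfl fun i _ => by rw [add_comm]
  simpa only [this] using hω

/-! ### Main theorem -/

set_option maxHeartbeats 2000000 in
/-- For i.i.d. positive integrable `(S_i)` whose distribution function `F` has a
unique `p`-th quantile `ξ_p` near which `F` is continuous and strictly increasing,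
`(1/n)·Σ_{j=1}^{⌊pn⌋} S_(j) → E[S_1·1{S_1 ≤ ξ_p}]` almost surely. -/
theorem sum_smallest_orderStats_slln
    {Ω : Type*} [MeasurableSpace Ω] (μ : Measure Ω) [IsProbabilityMeasure μ]
    (S : ℕ → Ω → ℝ) (hmeas : ∀ i, Measurable (S i))
    (hindep : iIndepFun S μ)
    (hident : ∀ i, IdentDistrib (S i) (S 1) μ μ)
    (hpos : ∀ i, ∀ᵐ ω ∂μ, 0 < S i ω)
    (hint : Integrable (S 1) μ)
    (F : ℝ → ℝ) (hF : ∀ t, F t = (μ {ω | S 1 ω ≤ t}).toReal)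
    (p : ℝ) (hp0 : 0 < p) (hp1 : p < 1)
    (ξ : ℝ) (hξ : F ξ = p) (huniq : ∀ x, F x = p → x = ξ)
    (hreg : ∃ δ > 0, ContinuousOn F (Set.Ioo (ξ - δ) (ξ + δ)) ∧
      StrictMonoOn F (Set.Ioo (ξ - δ) (ξ + δ))) :
    ∀ᵐ ω ∂μ,
      Tendsto
        (fun n : ℕ =>
          (1 / (n : ℝ)) * ∑ j ∈ Finset.Icc 1 ⌊p * (n : ℝ)⌋₊, orderStatEmp S n j ω)
        atTop
        (nhds (∫ ω, (if S 1 ω ≤ ξ then S 1 ω else 0) ∂μ)) := by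
  classical
  obtain ⟨δ, hδ, _, hFmono⟩ := hreg
  -- integrability facts
  have hint_max : ∀ t : ℝ, Integrable (fun ω => max (t - S 1 ω) 0) μ := fun t =>
    ((integrable_const t).sub hint).pos_part
  have hmeas_max : ∀ t : ℝ, Measurable (fun s : ℝ => max (t - s) 0) := fun t =>
    (measurable_const.sub measurable_id).max measurable_const
  set g : ℝ → ℝ := fun t => ∫ ω, max (t - S 1 ω) 0 ∂μ with hg
  -- Lipschitz property of g
  have hglip : ∀ t t' : ℝ, |g t - g t'| ≤ |t - t'| := by
    intro t t'
    rw [hg]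
    simp only
    rw [← integral_sub (hint_max t) (hint_max t')]
    calc |∫ ω, (max (t - S 1 ω) 0 - max (t' - S 1 ω) 0) ∂μ|
        ≤ ∫ ω, |max (t - S 1 ω) 0 - max (t' - S 1 ω) 0| ∂μ := by
          simpa [Real.norm_eq_abs] using
            norm_integral_le_integral_norm (fun ω => max (t - S 1 ω) 0 - max (t' - S 1 ω) 0)
      _ ≤ ∫ _ω, |t - t'| ∂μ := by
          refine integral_mono ((hint_max t).sub (hint_max t')).abs (integrable_const _) ?_
          intro ω
          have := abs_max_sub_max_le_abs (t - S 1 ω) (t' - S 1 ω) 0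
          simpa using this
      _ = |t - t'| := by simp
  -- SLLN events
  have hQ : ∀ᵐ ω ∂μ, ∀ q : ℚ,
      Tendsto (fun n : ℕ => (∑ i ∈ Finset.Icc 1 n, max ((q : ℝ) - S i ω) 0) / n) atTop
        (𝓝 (g (q : ℝ))) := by
    rw [ae_all_iff]
    intro q
    have h := slln_Icc μ S hmeas hindep hident (fun s => max ((q : ℝ) - s) 0)
      (hmeas_max _) (hint_max _)
    rw [hg]
    exact h
  have hCDF : ∀ c : ℝ, ∀ᵐ ω ∂μ,
      Tendsto (fun n : ℕ =>
          ((((Finset.Icc 1 n).filter (fun i => S i ω ≤ c)).card : ℝ)) / n) atTop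
        (𝓝 (F c)) := by
    intro c
    have hmeasset : MeasurableSet {ω | S 1 ω ≤ c} := (hmeas 1) measurableSet_Iic
    have hfm : Measurable (fun s : ℝ => if s ≤ c then (1 : ℝ) else 0) :=
      Measurable.ite measurableSet_Iic measurable_const measurable_const
    have hfi : Integrable (fun ω => if S 1 ω ≤ c then (1 : ℝ) else 0) μ := by
      have : (fun ω => if S 1 ω ≤ c then (1 : ℝ) else 0)
          = Set.indicator {ω | S 1 ω ≤ c} (fun _ => 1) := by
        ext ω; simp [Set.indicator_apply, Set.mem_setOf_eq]
      rw [this]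
      exact (integrable_const 1).indicator hmeasset
    have h := slln_Icc μ S hmeas hindep hident _ hfm hfi
    have hInt : ∫ ω, (if S 1 ω ≤ c then (1 : ℝ) else 0) ∂μ = F c := by
      have : (fun ω => if S 1 ω ≤ c then (1 : ℝ) else 0)
          = Set.indicator {ω | S 1 ω ≤ c} (fun _ => 1) := by
        ext ω; simp [Set.indicator_apply, Set.mem_setOf_eq]
      rw [this, integral_indicator_const (1 : ℝ) hmeasset, measureReal_def, hF c, smul_eq_mul, mul_one]
    rw [hInt] at h
    filter_upwards [h] with ω hω
    have : ∀ n : ℕ, ∑ i ∈ Finset.Icc 1 n, (if S i ω ≤ c then (1 : ℝ) else 0)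
        = (((Finset.Icc 1 n).filter (fun i => S i ω ≤ c)).card : ℝ) := by
      intro n
      rw [Finset.sum_boole]
    simpa only [this] using hω
  have hCDFa : ∀ᵐ ω ∂μ, ∀ m : ℕ,
      Tendsto (fun n : ℕ =>
          ((((Finset.Icc 1 n).filter (fun i => S i ω ≤ ξ - 1 / (m + 1))).card : ℝ)) / n) atTop
        (𝓝 (F (ξ - 1 / (m + 1)))) := ae_all_iff.2 fun m => hCDF _
  have hCDFb : ∀ᵐ ω ∂μ, ∀ m : ℕ,
      Tendsto (fun n : ℕ =>
          ((((Finset.Icc 1 n).filter (fun i => S i ω ≤ ξ + 1 / (m + 1))).card : ℝ)) / n) atTop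
        (𝓝 (F (ξ + 1 / (m + 1)))) := ae_all_iff.2 fun m => hCDF _
  -- floor convergence
  have hkn : Tendsto (fun n : ℕ => ((⌊p * (n : ℝ)⌋₊ : ℝ)) / n) atTop (𝓝 p) := by
    have hlow : Tendsto (fun n : ℕ => p - 1 / (n : ℝ)) atTop (𝓝 p) := by
      have : Tendsto (fun n : ℕ => 1 / (n : ℝ)) atTop (𝓝 0) := tendsto_one_div_atTop_nhds_zero_nat
      simpa using (tendsto_const_nhds (x := p)).sub this
    have hup : Tendsto (fun _n : ℕ => p) atTop (𝓝 p) := tendsto_const_nhds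
    refine tendsto_of_tendsto_of_tendsto_of_le_of_le' hlow hup ?_ ?_
    · filter_upwards [eventually_ge_atTop 1] with n hn
      have hn0 : (0 : ℝ) < n := by exact_mod_cast hn
      have h1 : p * (n : ℝ) < ⌊p * (n : ℝ)⌋₊ + 1 := Nat.lt_floor_add_one _
      rw [sub_le_iff_le_add, ← add_div, le_div_iff₀ hn0]
      nlinarith
    · filter_upwards [eventually_ge_atTop 1] with n hn
      have hn0 : (0 : ℝ) < n := by exact_mod_cast hn
      rw [div_le_iff₀ hn0]
      calc ((⌊p * (n : ℝ)⌋₊ : ℝ)) ≤ p * n := Nat.floor_le (by positivity)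
        _ = p * n := rfl
  -- main a.e. argument
  filter_upwards [hQ, hCDFa, hCDFb] with ω hQω hCa hCb
  set k : ℕ → ℕ := fun n => ⌊p * (n : ℝ)⌋₊ with hk
  set xihat : ℕ → ℝ := fun n => orderStatEmp S n (k n) ω with hxihatdef
  set A : ℕ → ℝ → ℝ := fun n t => (∑ i ∈ Finset.Icc 1 n, max (t - S i ω) 0) / n with hA
  have hk1 : ∀ᶠ n in atTop, 1 ≤ k n := by
    have : Tendsto (fun n : ℕ => p * (n : ℝ)) atTop atTop :=
      Tendsto.const_mul_atTop hp0 tendsto_natCast_atTop_atTop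
    have h2 := this.eventually_ge_atTop 1
    filter_upwards [h2] with n hn
    exact Nat.one_le_floor_iff _ |>.mpr hn
  have hkle : ∀ n : ℕ, k n ≤ n := by
    intro n
    have : p * (n : ℝ) ≤ (n : ℝ) := by
      nlinarith [Nat.cast_nonneg (α := ℝ) n]
    calc k n = ⌊p * (n : ℝ)⌋₊ := rfl
      _ ≤ ⌊(n : ℝ)⌋₊ := Nat.floor_le_floor this
      _ = n := Nat.floor_natCast n
  -- quantile convergence
  have hxihat : Tendsto xihat atTop (𝓝 ξ) := by
    rw [Metric.tendsto_atTop]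
    intro ε hε
    obtain ⟨m, hm⟩ := exists_nat_one_div_lt (lt_min hε hδ)
    have hm0 : (0 : ℝ) < 1 / (m + 1 : ℝ) := by positivity
    have hmε : 1 / (m + 1 : ℝ) < ε := lt_of_lt_of_le hm (min_le_left _ _)
    have hmδ : 1 / (m + 1 : ℝ) < δ := lt_of_lt_of_le hm (min_le_right _ _)
    set a := ξ - 1 / (m + 1 : ℝ) with hadef
    set b := ξ + 1 / (m + 1 : ℝ) with hbdef
    have hξmem : ξ ∈ Set.Ioo (ξ - δ) (ξ + δ) := by
      simp only [Set.mem_Ioo]; constructor <;> linarith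
    have hamem : a ∈ Set.Ioo (ξ - δ) (ξ + δ) := by
      rw [hadef]; simp only [Set.mem_Ioo]; constructor <;> linarith
    have hbmem : b ∈ Set.Ioo (ξ - δ) (ξ + δ) := by
      rw [hbdef]; simp only [Set.mem_Ioo]; constructor <;> linarith
    have hFa : F a < p := by
      rw [← hξ]; exact hFmono hamem hξmem (by rw [hadef]; linarith)
    have hFb : p < F b := by
      rw [← hξ]; exact hFmono hξmem hbmem (by rw [hbdef]; linarith)
    have h1 := (hCa m).eventually_lt hkn hFa
    have h2 := hkn.eventually_lt (hCb m) hFb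
    rw [eventually_atTop] at h1 h2
    obtain ⟨N1, hN1⟩ := h1
    obtain ⟨N2, hN2⟩ := h2
    refine ⟨max (max N1 N2) 1, fun n hn => ?_⟩
    have hn1 : N1 ≤ n := le_trans (le_trans (le_max_left _ _) (le_max_left _ _)) hn
    have hn2 : N2 ≤ n := le_trans (le_trans (le_max_right _ _) (le_max_left _ _)) hn
    have hnpos : (0 : ℝ) < n := by
      have : 1 ≤ n := le_trans (le_max_right _ _) hn
      exact_mod_cast this
    have hca : ((Finset.Icc 1 n).filter (fun i => S i ω ≤ a)).card < k n := by
      have := hN1 n hn1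
      have hlt : (((Finset.Icc 1 n).filter (fun i => S i ω ≤ a)).card : ℝ) < (k n : ℝ) := by
        have := (div_lt_div_iff_of_pos_right hnpos).1 this
        exact this
      exact_mod_cast hlt
    have hcb : k n ≤ ((Finset.Icc 1 n).filter (fun i => S i ω ≤ b)).card := by
      have := hN2 n hn2
      have hlt : (k n : ℝ) < (((Finset.Icc 1 n).filter (fun i => S i ω ≤ b)).card : ℝ) := by
        have := (div_lt_div_iff_of_pos_right hnpos).1 this
        exact this
      exact_mod_cast hlt.le
    obtain ⟨hlo, hhi⟩ := orderStatEmp_bounds S ω hca hcb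
    have habs : |xihat n - ξ| ≤ 1 / (m + 1 : ℝ) := by
      rw [abs_le]
      constructor
      · have h := hlo; rw [hadef] at h
        simp only [hxihatdef] at h ⊢
        linarith
      · have h := hhi; rw [hbdef] at h
        simp only [hxihatdef] at h ⊢
        linarith
    calc dist (xihat n) ξ = |xihat n - ξ| := Real.dist_eq _ _
      _ ≤ 1 / (m + 1 : ℝ) := habs
      _ < ε := hmε
  -- Lipschitz property of the empirical A
  have hAlip : ∀ n : ℕ, 1 ≤ n → ∀ t t' : ℝ, |A n t - A n t'| ≤ |t - t'| := by
    intro n hn t t'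
    have hnpos : (0 : ℝ) < n := by exact_mod_cast hn
    simp only [hA]
    rw [div_sub_div_same, abs_div, abs_of_pos hnpos, div_le_iff₀ hnpos]
    rw [← Finset.sum_sub_distrib]
    calc |∑ i ∈ Finset.Icc 1 n, (max (t - S i ω) 0 - max (t' - S i ω) 0)|
        ≤ ∑ i ∈ Finset.Icc 1 n, |max (t - S i ω) 0 - max (t' - S i ω) 0| :=
          Finset.abs_sum_le_sum_abs _ _
      _ ≤ ∑ _i ∈ Finset.Icc 1 n, |t - t'| := by
          refine Finset.sum_le_sum fun i _ => ?_
          have := abs_max_sub_max_le_abs (t - S i ω) (t' - S i ω) 0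
          simpa using this
      _ = n * |t - t'| := by
          rw [Finset.sum_const, Nat.card_Icc, nsmul_eq_mul]
          simp
      _ = |t - t'| * n := by ring
  -- convergence of A n (xihat n) to g ξ
  have hAconv : Tendsto (fun n => A n (xihat n)) atTop (𝓝 (g ξ)) := by
    rw [Metric.tendsto_atTop]
    intro ε hε
    obtain ⟨q, hq1, hq2⟩ := exists_rat_btwn (show ξ - ε / 4 < ξ by linarith)
    have hqξ : |(q : ℝ) - ξ| < ε / 4 := by rw [abs_lt]; constructor <;> linarith
    have h1 := hQω q
    rw [Metric.tendsto_atTop] at h1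
    obtain ⟨N1, hN1⟩ := h1 (ε / 4) (by linarith)
    have h2 := hxihat
    rw [Metric.tendsto_atTop] at h2
    obtain ⟨N2, hN2⟩ := h2 (ε / 4) (by linarith)
    refine ⟨max (max N1 N2) 1, fun n hn => ?_⟩
    have hn1 : N1 ≤ n := le_trans (le_trans (le_max_left _ _) (le_max_left _ _)) hn
    have hn2 : N2 ≤ n := le_trans (le_trans (le_max_right _ _) (le_max_left _ _)) hn
    have hnn : 1 ≤ n := le_trans (le_max_right _ _) hn
    have e1 : |A n (xihat n) - A n (q : ℝ)| ≤ |xihat n - (q : ℝ)| := hAlip n hnn _ _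
    have e2 : dist (A n (q : ℝ)) (g (q : ℝ)) < ε / 4 := by
      have := hN1 n hn1
      simpa [hA] using this
    have e3 : dist (xihat n) ξ < ε / 4 := hN2 n hn2
    have e4 : |xihat n - (q : ℝ)| ≤ |xihat n - ξ| + |ξ - (q : ℝ)| := abs_sub_le _ _ _
    have e5 : |g (q : ℝ) - g ξ| ≤ |(q : ℝ) - ξ| := hglip _ _
    rw [Real.dist_eq] at e2 e3 ⊢
    have hsum : |A n (xihat n) - g ξ|
        ≤ |A n (xihat n) - A n (q : ℝ)| + |A n (q : ℝ) - g (q : ℝ)| + |g (q : ℝ) - g ξ| := by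
      calc |A n (xihat n) - g ξ|
          ≤ |A n (xihat n) - A n (q : ℝ)| + |A n (q : ℝ) - g ξ| := abs_sub_le _ _ _
        _ ≤ |A n (xihat n) - A n (q : ℝ)|
              + (|A n (q : ℝ) - g (q : ℝ)| + |g (q : ℝ) - g ξ|) := by
            have := abs_sub_le (A n (q : ℝ)) (g (q : ℝ)) (g ξ)
            linarith
        _ = _ := by ring
    have hgq : |ξ - (q : ℝ)| < ε / 4 := by rw [abs_sub_comm]; exact hqξ
    linarith
  -- the identity, eventually
  have heq : ∀ᶠ n : ℕ in atTop,
      (1 / (n : ℝ)) * ∑ j ∈ Finset.Icc 1 (k n), orderStatEmp S n j ω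
        = ((k n : ℝ) / n) * xihat n - A n (xihat n) := by
    filter_upwards [hk1, eventually_ge_atTop 1] with n hkn1 hn1
    have hnpos : (0 : ℝ) < n := by exact_mod_cast hn1
    have hid := key_identity S ω hkn1 (hkle n)
    simp only [hxihatdef, hA, hk]
    rw [hid]
    field_simp
    try ring
    rw [mul_comm (n : ℝ) p]
  -- conclusion
  have hlim : Tendsto (fun n => ((k n : ℝ) / n) * xihat n - A n (xihat n)) atTop
      (𝓝 (p * ξ - g ξ)) := (hkn.mul hxihat).sub hAconv
  have hfinal : ∫ ω, (if S 1 ω ≤ ξ then S 1 ω else 0) ∂μ = p * ξ - g ξ := by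
    have hmeasset : MeasurableSet {ω' | S 1 ω' ≤ ξ} := (hmeas 1) measurableSet_Iic
    have hind2 : Integrable (fun ω' => if S 1 ω' ≤ ξ then S 1 ω' else 0) μ := by
      have heq2 : (fun ω' => if S 1 ω' ≤ ξ then S 1 ω' else 0)
          = Set.indicator {ω' | S 1 ω' ≤ ξ} (S 1) := by
        ext ω'; simp [Set.indicator_apply, Set.mem_setOf_eq]
      rw [heq2]
      exact hint.indicator hmeasset
    have hind1 : Integrable (fun ω' => if S 1 ω' ≤ ξ then ξ else 0) μ := by
      have heq1 : (fun ω' => if S 1 ω' ≤ ξ then ξ else 0)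
          = Set.indicator {ω' | S 1 ω' ≤ ξ} (fun _ => ξ) := by
        ext ω'; simp [Set.indicator_apply, Set.mem_setOf_eq]
      rw [heq1]
      exact (integrable_const ξ).indicator hmeasset
    have hmaxeq : (fun ω' => max (ξ - S 1 ω') 0)
        = fun ω' => (if S 1 ω' ≤ ξ then ξ else 0) - (if S 1 ω' ≤ ξ then S 1 ω' else 0) := by
      ext ω'
      by_cases h : S 1 ω' ≤ ξ
      · simp [h, max_eq_left (sub_nonneg.2 h)]
      · push_neg at h
        simp [not_le.2 h, max_eq_right (by linarith : ξ - S 1 ω' ≤ 0)]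
    have hI1 : ∫ ω', (if S 1 ω' ≤ ξ then ξ else 0) ∂μ = ξ * p := by
      have heq1 : (fun ω' => if S 1 ω' ≤ ξ then ξ else 0)
          = Set.indicator {ω' | S 1 ω' ≤ ξ} (fun _ => ξ) := by
        ext ω'; simp [Set.indicator_apply, Set.mem_setOf_eq]
      rw [heq1, integral_indicator_const ξ hmeasset, smul_eq_mul, measureReal_def, ← hF ξ, hξ, mul_comm]
    have hgξ : g ξ = ξ * p - ∫ ω', (if S 1 ω' ≤ ξ then S 1 ω' else 0) ∂μ := by
      rw [hg]
      simp only
      rw [hmaxeq, integral_sub hind1 hind2, hI1]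
    linarith
  rw [hfinal]
  exact hlim.congr' (heq.mono fun n h => h.symm)
end

section
/- Let (S_j)_{j≥1} be independent, identically distributed, strictly positive random variables with common distribution function F, let α > 0, and let f: (0,∞) → [0,∞) be measurable with E[f(S_1)·S_1^α] < ∞. Fix c ∈ (0,1), let p ∈ (c,1), and suppose ξ_p, the p-th quantile of F, satisfies F(ξ_p) = p with F continuous and strictly increasing in a neighborhood of ξ_p, and E[S_1^α·1{S_1 ≤ ξ_p}] > 0. Then there is a finite constant C such that, almost surely, for all sufficiently large n and all subsets ν ⊆ {1,…,n} with |ν| ≤ c·n, (Σ_{j∉ν} f(S_j)·S_j^α) / (Σ_{j∉ν} S_j^α) ≤ C. -/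
open MeasureTheory Filter ProbabilityTheory
open scoped ENNReal Topology

private lemma sum_Icc_one_eq_range (h : ℕ → ℝ) (n : ℕ) :
    ∑ j ∈ Finset.Icc 1 n, h j = ∑ i ∈ Finset.range n, h (i + 1) := by
  induction n with
  | zero => simp
  | succ n ih =>
      rw [Finset.sum_range_succ, ← ih, Finset.sum_Icc_succ_top (by omega)]

private lemma slln_comp {Ω : Type*} [MeasurableSpace Ω] (μ : Measure Ω)
    [IsProbabilityMeasure μ]
    (S : ℕ → Ω → ℝ) (hmeas : ∀ i, Measurable (S i))
    (hindep : iIndepFun S μ)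
    (hident : ∀ i, IdentDistrib (S i) (S 1) μ μ)
    (g : ℝ → ℝ) (hg : Measurable g) (hint : Integrable (fun ω => g (S 1 ω)) μ) :
    ∀ᵐ ω ∂μ, Tendsto (fun n : ℕ => (∑ j ∈ Finset.Icc 1 n, g (S j ω)) / n) atTop
      (𝓝 (∫ ω, g (S 1 ω) ∂μ)) := by
  set X : ℕ → Ω → ℝ := fun j ω => g (S (j + 1) ω) with hX
  have hX0 : X 0 = fun ω => g (S 1 ω) := rfl
  have hXindep : Pairwise (Function.onFun (IndepFun · · μ) X) := by
    intro i j hij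
    exact (hindep.indepFun (show i + 1 ≠ j + 1 by omega)).comp hg hg
  have hXident : ∀ i, IdentDistrib (X i) (X 0) μ μ := by
    intro i
    have := (hident (i + 1)).comp hg
    exact this
  have h := strong_law_ae_real X (by rw [hX0]; exact hint) hXindep hXident
  filter_upwards [h] with ω hω
  have : (fun n : ℕ => (∑ j ∈ Finset.Icc 1 n, g (S j ω)) / n)
      = fun n : ℕ => (∑ i ∈ Finset.range n, X i ω) / n := by
    funext n
    rw [sum_Icc_one_eq_range (fun j => g (S j ω)) n]
  rw [this]
  exact hω

/-- Uniform almost-sure boundedness of the size-biased conditional means: for i.i.d.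
positive `(S_j)`, `α > 0` and measurable nonnegative `f` with `E[f(S)S^α] < ∞`,
if `c < p < 1` and `ξ_p` is a regular unique `p`-th quantile of the common
distribution function `F` with `E[S^α·1{S ≤ ξ_p}] > 0`, then there is a finite
constant `C` such that almost surely, for all large `n` and every `ν ⊆ {1,…,n}` with
`|ν| ≤ c·n`, `(Σ_{j∈[n]∖ν} f(S_j)S_j^α)/(Σ_{j∈[n]∖ν} S_j^α) ≤ C`. -/
theorem size_biased_conditional_mean_unif_bounded
    {Ω : Type*} [MeasurableSpace Ω] (μ : Measure Ω) [IsProbabilityMeasure μ]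
    (S : ℕ → Ω → ℝ) (hmeas : ∀ i, Measurable (S i))
    (hindep : iIndepFun S μ)
    (hident : ∀ i, IdentDistrib (S i) (S 1) μ μ)
    (hpos : ∀ i, ∀ᵐ ω ∂μ, 0 < S i ω)
    (F : ℝ → ℝ) (hF : ∀ t, F t = (μ {ω | S 1 ω ≤ t}).toReal)
    (α : ℝ) (hα : 0 < α)
    (f : ℝ → ℝ) (hfmeas : Measurable f) (hfnonneg : ∀ x : ℝ, 0 < x → 0 ≤ f x)
    (hintf : Integrable (fun ω => f (S 1 ω) * S 1 ω ^ α) μ)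
    (c : ℝ) (hc0 : 0 < c) (hc1 : c < 1)
    (p : ℝ) (hpc : c < p) (hp1 : p < 1)
    (ξ : ℝ) (hξ : F ξ = p) (huniq : ∀ x, F x = p → x = ξ)
    (hreg : ∃ δ > 0, ContinuousOn F (Set.Ioo (ξ - δ) (ξ + δ)) ∧
      StrictMonoOn F (Set.Ioo (ξ - δ) (ξ + δ)))
    (hquant : 0 < ∫ ω, (if S 1 ω ≤ ξ then S 1 ω ^ α else 0) ∂μ) :
    ∃ C : ℝ, ∀ᵐ ω ∂μ, ∃ N : ℕ, ∀ n ≥ N, ∀ ν : Finset ℕ,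
      ν ⊆ Finset.Icc 1 n → (ν.card : ℝ) ≤ c * n →
        (∑ j ∈ Finset.Icc 1 n \ ν, f (S j ω) * S j ω ^ α) /
            (∑ j ∈ Finset.Icc 1 n \ ν, S j ω ^ α) ≤ C := by
  -- Choose a small threshold t > 0 with μ{S₁ ≤ t} < 1 - c.
  obtain ⟨t, ht0, htc⟩ : ∃ t > (0:ℝ), (μ {ω | S 1 ω ≤ t}).toReal < 1 - c := by
    set A : ℕ → Set Ω := fun k => {ω | S 1 ω ≤ ((k:ℝ) + 1)⁻¹} with hA
    have hAmeas : ∀ k, NullMeasurableSet (A k) μ := fun k =>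
      ((hmeas 1) measurableSet_Iic).nullMeasurableSet
    have hAanti : Antitone A := by
      intro k l hkl ω hω
      have h1 : ((l:ℝ) + 1)⁻¹ ≤ ((k:ℝ) + 1)⁻¹ := by
        apply inv_anti₀ (by positivity)
        exact_mod_cast by omega
      exact le_trans hω h1
    have hInter : (⋂ k, A k) ⊆ {ω | S 1 ω ≤ 0} := by
      intro ω hω
      simp only [Set.mem_iInter, hA, Set.mem_setOf_eq] at hω ⊢
      by_contra h
      push_neg at h
      obtain ⟨k, hk⟩ := exists_nat_one_div_lt h
      have := hω k
      rw [one_div] at hk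
      linarith
    have h0 : μ {ω | S 1 ω ≤ 0} = 0 := by
      have := hpos 1
      rw [ae_iff] at this
      convert this using 2
      ext ω; simp
    have hIz : μ (⋂ k, A k) = 0 := le_antisymm (le_trans (measure_mono hInter) h0.le) bot_le
    have htend := tendsto_measure_iInter_atTop hAmeas hAanti ⟨0, measure_ne_top μ _⟩
    rw [hIz] at htend
    have hpos' : (0:ℝ≥0∞) < ENNReal.ofReal (1 - c) := by
      rw [ENNReal.ofReal_pos]; linarith
    obtain ⟨k, hk⟩ := (htend.eventually (eventually_lt_nhds hpos')).exists
    refine ⟨((k:ℝ) + 1)⁻¹, by positivity, ?_⟩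
    have : μ (A k) < ENNReal.ofReal (1 - c) := hk
    rw [ENNReal.lt_ofReal_iff_toReal_lt (measure_ne_top μ _)] at this
    exact this
  set q : ℝ := (μ {ω | t < S 1 ω}).toReal with hq
  have hmIic : MeasurableSet {ω | S 1 ω ≤ t} := (hmeas 1) measurableSet_Iic
  have hmIoi : MeasurableSet {ω | t < S 1 ω} := (hmeas 1) measurableSet_Ioi
  have hqc : c < q := by
    have hcompl : μ {ω | t < S 1 ω} = 1 - μ {ω | S 1 ω ≤ t} := by
      have : {ω | t < S 1 ω} = {ω | S 1 ω ≤ t}ᶜ := by ext ω; simp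
      rw [this, measure_compl hmIic (measure_ne_top μ _), measure_univ]
    have h1 : q = 1 - (μ {ω | S 1 ω ≤ t}).toReal := by
      rw [hq, hcompl, ENNReal.toReal_sub_of_le (prob_le_one) (by simp)]
      simp
    rw [h1]; linarith
  set ε : ℝ := (q - c) / 2 with hε
  have hε0 : 0 < ε := by rw [hε]; linarith
  -- The two functions for the SLLN.
  set g₁ : ℝ → ℝ := fun x => f x * x ^ α with hg₁
  set g₂ : ℝ → ℝ := fun x => if t < x then (1:ℝ) else 0 with hg₂
  have hg₁meas : Measurable g₁ := hfmeas.mul (measurable_id.pow measurable_const)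
  have hg₂meas : Measurable g₂ :=
    Measurable.ite measurableSet_Ioi measurable_const measurable_const
  have hint₂ : Integrable (fun ω => g₂ (S 1 ω)) μ := by
    have : (fun ω => g₂ (S 1 ω)) = Set.indicator {ω | t < S 1 ω} (fun _ => (1:ℝ)) := by
      funext ω
      simp [hg₂, Set.indicator_apply, Set.mem_setOf_eq]
    rw [this]
    exact (integrable_const (1:ℝ)).indicator hmIoi
  have hint₂val : ∫ ω, g₂ (S 1 ω) ∂μ = q := by
    have h1 : (fun ω => g₂ (S 1 ω)) = Set.indicator {ω | t < S 1 ω} (fun _ => (1:ℝ)) := by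
      funext ω
      simp [hg₂, Set.indicator_apply, Set.mem_setOf_eq]
    rw [h1, integral_indicator_const (1:ℝ) hmIoi]
    simp [hq, measureReal_def]
  set m : ℝ := ∫ ω, g₁ (S 1 ω) ∂μ with hm
  have hm0 : 0 ≤ m := by
    rw [hm]
    apply integral_nonneg_of_ae
    filter_upwards [hpos 1] with ω hω
    exact mul_nonneg (hfnonneg _ hω) (Real.rpow_nonneg hω.le _)
  have htα : 0 < t ^ α := Real.rpow_pos_of_pos ht0 α
  refine ⟨(m + 1) / (t ^ α * ε), ?_⟩
  have hae₁ := slln_comp μ S hmeas hindep hident g₁ hg₁meas hintf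
  have hae₂ := slln_comp μ S hmeas hindep hident g₂ hg₂meas hint₂
  have haepos : ∀ᵐ ω ∂μ, ∀ i, 0 < S i ω := (ae_all_iff).2 hpos
  filter_upwards [hae₁, hae₂, haepos] with ω h1 h2 hSpos
  rw [hint₂val] at h2
  -- Extract eventual bounds.
  have hev1 : ∀ᶠ n : ℕ in atTop,
      (∑ j ∈ Finset.Icc 1 n, g₁ (S j ω)) / n ≤ m + 1 :=
    h1.eventually (eventually_le_nhds (by linarith))
  have hev2 : ∀ᶠ n : ℕ in atTop,
      q - ε ≤ (∑ j ∈ Finset.Icc 1 n, g₂ (S j ω)) / n :=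
    h2.eventually (eventually_ge_nhds (by linarith))
  obtain ⟨N₁, hN₁⟩ := eventually_atTop.1 hev1
  obtain ⟨N₂, hN₂⟩ := eventually_atTop.1 hev2
  refine ⟨max (max N₁ N₂) 1, fun n hn ν hν hνcard => ?_⟩
  have hn1 : 1 ≤ n := le_trans (le_max_right _ _) hn
  have hnN₁ : N₁ ≤ n := le_trans (le_trans (le_max_left _ _) (le_max_left _ _)) hn
  have hnN₂ : N₂ ≤ n := le_trans (le_trans (le_max_right _ _) (le_max_left _ _)) hn
  have hnpos : (0:ℝ) < n := by exact_mod_cast hn1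
  set T := Finset.Icc 1 n \ ν with hT
  -- numerator bound
  have hnum : (∑ j ∈ T, f (S j ω) * S j ω ^ α) ≤ (m + 1) * n := by
    have hsub : (∑ j ∈ T, f (S j ω) * S j ω ^ α)
        ≤ ∑ j ∈ Finset.Icc 1 n, g₁ (S j ω) := by
      apply Finset.sum_le_sum_of_subset_of_nonneg (Finset.sdiff_subset)
      intro i _ _
      exact mul_nonneg (hfnonneg _ (hSpos i)) (Real.rpow_nonneg (hSpos i).le _)
    have := hN₁ n hnN₁
    rw [div_le_iff₀ hnpos] at this
    exact le_trans hsub this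
  -- counting bound
  have hcount : ε * n ≤ ∑ j ∈ T, g₂ (S j ω) := by
    have hsplit : (∑ j ∈ T, g₂ (S j ω)) + ∑ j ∈ ν, g₂ (S j ω)
        = ∑ j ∈ Finset.Icc 1 n, g₂ (S j ω) := Finset.sum_sdiff hν
    have hνbound : (∑ j ∈ ν, g₂ (S j ω)) ≤ (ν.card : ℝ) := by
      calc (∑ j ∈ ν, g₂ (S j ω)) ≤ ∑ _j ∈ ν, (1:ℝ) := by
            apply Finset.sum_le_sum
            intro i _
            by_cases h : t < S i ω <;> simp [hg₂, h]
        _ = (ν.card : ℝ) := by simp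
    have htot : (q - ε) * n ≤ ∑ j ∈ Finset.Icc 1 n, g₂ (S j ω) := by
      have := hN₂ n hnN₂
      rw [le_div_iff₀ hnpos] at this
      exact this
    have : ε * n = (q - ε) * n - c * n := by rw [hε]; ring
    rw [this]
    have h3 : (∑ j ∈ T, g₂ (S j ω))
        = (∑ j ∈ Finset.Icc 1 n, g₂ (S j ω)) - ∑ j ∈ ν, g₂ (S j ω) := by
      rw [← hsplit]; ring
    rw [h3]
    have h4 : (∑ j ∈ ν, g₂ (S j ω)) ≤ c * n := le_trans hνbound hνcard
    linarith
  -- denominator bound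
  have hden : t ^ α * ε * n ≤ ∑ j ∈ T, S j ω ^ α := by
    have hterm : ∀ j ∈ T, t ^ α * g₂ (S j ω) ≤ S j ω ^ α := by
      intro j _
      by_cases h : t < S j ω
      · simp only [hg₂, if_pos h, mul_one]
        exact Real.rpow_le_rpow ht0.le h.le hα.le
      · simp only [hg₂, if_neg h, mul_zero]
        exact Real.rpow_nonneg (hSpos j).le _
    calc t ^ α * ε * n = t ^ α * (ε * n) := by ring
      _ ≤ t ^ α * ∑ j ∈ T, g₂ (S j ω) := by
          apply mul_le_mul_of_nonneg_left hcount htα.le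
      _ = ∑ j ∈ T, t ^ α * g₂ (S j ω) := Finset.mul_sum _ _ _
      _ ≤ ∑ j ∈ T, S j ω ^ α := Finset.sum_le_sum hterm
  have hdenpos : 0 < ∑ j ∈ T, S j ω ^ α :=
    lt_of_lt_of_le (by positivity) hden
  rw [div_le_iff₀ hdenpos]
  calc (∑ j ∈ T, f (S j ω) * S j ω ^ α) ≤ (m + 1) * n := hnum
    _ = (m + 1) / (t ^ α * ε) * (t ^ α * ε * n) := by
        field_simp
    _ ≤ (m + 1) / (t ^ α * ε) * ∑ j ∈ T, S j ω ^ α := by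
        apply mul_le_mul_of_nonneg_left hden
        positivity
end
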